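/- For all φ,χ∈F, α∈R⁺, i∈{1,…,n} with α(h_i)≠0, and b∈A, writing p_i(φ,χ)=Ω_{α_i}(p(φ,χ)) and C(z,k)=z(z−1)⋯(z−k+1)/k! for the generalized binomial coefficient (z∈ℤ, k∈ℕ), the following hold in U(g⊗A): (i) (x_α^+⊗b)·p_i(φ,χ) = Σ_{ψ₁∈F(φ),ψ₂∈F(χ),|ψ₁|=|ψ₂|} C(α(h_i)+|ψ₁|−1,|ψ₁|)·m(ψ₁)m(ψ₂)·p_i(φ−ψ₁,χ−ψ₂)·(x_α^+⊗bπ(ψ₁)π(ψ₂)); and (ii) p_i(φ,χ)·(x_α^−⊗b) = Σ_{ψ₁∈F(φ),ψ₂∈F(χ),|ψ₁|=|ψ₂|} C(α(h_i)+|ψ₁|−1,|ψ₁|)·m(ψ₁)m(ψ₂)·(x_α^−⊗bπ(ψ₁)π(ψ₂))·p_i(φ−ψ₁,χ−ψ₂). -/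

import Mathlib

open scoped TensorProduct
open Finsupp
open scoped Classical

noncomputable section

namespace MapAlgebra

/-- the divided power `u^{(r)} = u^r / r!` in a `ℂ`-algebra. -/
def dp {S : Type*} [Ring S] [Algebra ℂ S] (u : S) (r : ℕ) : S :=
  (r.factorial : ℂ)⁻¹ • u ^ r

variable {A : Type*} [CommRing A] [Algebra ℂ A]

/-- `|ψ| = Σ_a ψ(a)` for a multiset `ψ` of elements of `A`. -/
def wt (ψ : A →₀ ℕ) : ℕ := ψ.sum fun _ n => n

/-- `π(ψ) = ∏_a a^{ψ(a)}`. -/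
def piF (ψ : A →₀ ℕ) : A := ψ.prod fun a n => a ^ n

/-- `m(ψ) = |ψ|! / ∏_a ψ(a)!`. -/
def mF (ψ : A →₀ ℕ) : ℕ := Finsupp.multinomial ψ


set_option linter.unusedSectionVars false
set_option maxHeartbeats 1600000

section Prelude
variable {A : Type*} [CommRing A] [Algebra ℂ A]

@[simp] lemma wt_zero : wt (0 : A →₀ ℕ) = 0 := Finsupp.sum_zero_index

lemma wt_add (φ ψ : A →₀ ℕ) : wt (φ + ψ) = wt φ + wt ψ :=
  Finsupp.sum_add_index' (fun _ => rfl) (fun _ _ _ => rfl)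

lemma wt_eq_zero {ψ : A →₀ ℕ} : wt ψ = 0 ↔ ψ = 0 := by
  rw [wt, Finsupp.sum, Finset.sum_eq_zero_iff]
  constructor
  · intro h; ext a
    by_cases ha : a ∈ ψ.support
    · simpa using h a ha
    · simpa using Finsupp.notMem_support_iff.mp ha
  · rintro rfl; simp

lemma wt_le {ψ φ : A →₀ ℕ} (h : ψ ≤ φ) : wt ψ ≤ wt φ := by
  obtain ⟨θ, rfl⟩ := exists_add_of_le h
  rw [wt_add]; omega

lemma wt_sub {ψ φ : A →₀ ℕ} (h : ψ ≤ φ) : wt (φ - ψ) = wt φ - wt ψ := by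
  have := wt_add ψ (φ - ψ)
  rw [add_tsub_cancel_of_le h] at this
  omega

@[simp] lemma piF_zero : piF (0 : A →₀ ℕ) = 1 := Finsupp.prod_zero_index

lemma piF_add (φ ψ : A →₀ ℕ) : piF (φ + ψ) = piF φ * piF ψ :=
  Finsupp.prod_add_index' (fun _ => pow_zero _) (fun _ _ _ => pow_add _ _ _)

lemma piF_sub_mul {ψ μ : A →₀ ℕ} (h : ψ ≤ μ) : piF ψ * piF (μ - ψ) = piF μ := by
  rw [← piF_add, add_tsub_cancel_of_le h]

@[simp] lemma mF_zero : mF (0 : A →₀ ℕ) = 1 := by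
  simp [mF, Finsupp.multinomial_eq, Nat.multinomial]

lemma Iic_zero : Finset.Iic (0 : A →₀ ℕ) = {0} := by
  ext ψ; simp [Finset.mem_Iic, nonpos_iff_eq_zero]

lemma sum_erase_zero_eq {M : Type*} [AddCommMonoid M] (s : Finset (A →₀ ℕ)) (g : (A →₀ ℕ) → M) :
    ∑ x ∈ s.erase 0, g x = ∑ x ∈ s, if x = 0 then 0 else g x := by
  rw [← Finset.sum_erase s (f := fun x => if x = 0 then 0 else g x) (a := 0) (by simp)]
  exact Finset.sum_congr rfl fun x hx => by
    rw [if_neg (Finset.ne_of_mem_erase hx)]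

/-- master reindexing: pairs `(ψ, θ)` with `ψ + θ ≤ φ`, summed as `(μ, ψ)` with `μ = ψ + θ`. -/
lemma sum_Iic_mu {M : Type*} [AddCommMonoid M] (φ : A →₀ ℕ) (f : (A →₀ ℕ) → (A →₀ ℕ) → M) :
    ∑ ψ ∈ Finset.Iic φ, ∑ θ ∈ Finset.Iic (φ - ψ), f ψ θ
      = ∑ μ ∈ Finset.Iic φ, ∑ ψ ∈ Finset.Iic μ, f ψ (μ - ψ) := by
  rw [Finset.sum_sigma' (Finset.Iic φ) (fun ψ => Finset.Iic (φ - ψ)) (fun ψ θ => f ψ θ),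
      Finset.sum_sigma' (Finset.Iic φ) (fun μ => Finset.Iic μ) (fun μ ψ => f ψ (μ - ψ))]
  refine Finset.sum_bij' (fun x _ => ⟨x.1 + x.2, x.1⟩) (fun y _ => ⟨y.2, y.1 - y.2⟩) ?_ ?_ ?_ ?_ ?_
  · rintro ⟨ψ, θ⟩ hx
    simp only [Finset.mem_sigma, Finset.mem_Iic] at hx ⊢
    exact ⟨(le_tsub_iff_left hx.1).mp hx.2, le_self_add⟩
  · rintro ⟨μ, ψ⟩ hy
    simp only [Finset.mem_sigma, Finset.mem_Iic] at hy ⊢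
    exact ⟨hy.2.trans hy.1, tsub_le_tsub_right hy.1 ψ⟩
  · rintro ⟨ψ, θ⟩ hx
    simp [add_tsub_cancel_left]
  · rintro ⟨μ, ψ⟩ hy
    simp only [Finset.mem_sigma, Finset.mem_Iic] at hy
    simp [add_tsub_cancel_of_le hy.2]
  · rintro ⟨ψ, θ⟩ hx
    simp [add_tsub_cancel_left]

/-- swapping the two nested sums over pairs `(ψ, θ)` with `ψ + θ ≤ φ`. -/
lemma sum_Iic_swap {M : Type*} [AddCommMonoid M] (φ : A →₀ ℕ) (f : (A →₀ ℕ) → (A →₀ ℕ) → M) :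
    ∑ ψ ∈ Finset.Iic φ, ∑ θ ∈ Finset.Iic (φ - ψ), f ψ θ
      = ∑ θ ∈ Finset.Iic φ, ∑ ψ ∈ Finset.Iic (φ - θ), f ψ θ := by
  rw [Finset.sum_sigma' (Finset.Iic φ) (fun ψ => Finset.Iic (φ - ψ)) (fun ψ θ => f ψ θ),
      Finset.sum_sigma' (Finset.Iic φ) (fun θ => Finset.Iic (φ - θ)) (fun θ ψ => f ψ θ)]
  refine Finset.sum_bij' (fun x _ => ⟨x.2, x.1⟩) (fun y _ => ⟨y.2, y.1⟩) ?_ ?_ ?_ ?_ ?_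
  · rintro ⟨ψ, θ⟩ hx
    simp only [Finset.mem_sigma, Finset.mem_Iic] at hx ⊢
    have h1 : ψ + θ ≤ φ := (le_tsub_iff_left hx.1).mp hx.2
    have h2 : θ ≤ φ := le_trans (le_add_self) h1
    exact ⟨h2, (le_tsub_iff_right h2).mpr h1⟩
  · rintro ⟨θ, ψ⟩ hy
    simp only [Finset.mem_sigma, Finset.mem_Iic] at hy ⊢
    have h1 : ψ + θ ≤ φ := (le_tsub_iff_right hy.1).mp hy.2
    have h2 : ψ ≤ φ := le_trans le_self_add h1
    exact ⟨h2, (le_tsub_iff_left h2).mpr h1⟩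
  · rintro ⟨ψ, θ⟩ _; rfl
  · rintro ⟨θ, ψ⟩ _; rfl
  · rintro ⟨ψ, θ⟩ _; rfl

def wtHom : (A →₀ ℕ) →+ ℕ where
  toFun := wt
  map_zero' := Finsupp.sum_zero_index
  map_add' := fun φ ψ =>
    (Finsupp.sum_add_index' (h := fun (_ : A) (n : ℕ) => n) (fun _ => rfl) (fun _ _ _ => rfl) :
      wt (φ + ψ) = wt φ + wt ψ)

@[simp] lemma wt_single (a : A) (n : ℕ) : wt (Finsupp.single a n) = n :=
  Finsupp.sum_single_index rfl


open MvPolynomial in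
lemma prod_X_pow (s : Finset A) (k : A → ℕ) :
    ∏ i ∈ s, (X i : MvPolynomial A ℂ) ^ k i
      = monomial (∑ i ∈ s, Finsupp.single i (k i)) 1 := by
  induction s using Finset.cons_induction with
  | empty => simp
  | cons a s ha ih => rw [Finset.prod_cons, Finset.sum_cons, ih, X_pow_eq_monomial,
      monomial_mul, one_mul]

lemma multinomial_subset {s : Finset A} {f : A →₀ ℕ} (h : f.support ⊆ s) :
    Nat.multinomial s ⇑f = mF f := by
  have h1 := Nat.multinomial_spec s ⇑f
  have hp : ∏ i ∈ s, (f i).factorial = ∏ i ∈ f.support, (f i).factorial := by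
    symm; apply Finset.prod_subset h
    intro x _ hnx; simp [Finsupp.notMem_support_iff.mp hnx]
  have hs : ∑ i ∈ s, f i = ∑ i ∈ f.support, f i := by
    symm; apply Finset.sum_subset h
    intro x _ hnx; simpa using Finsupp.notMem_support_iff.mp hnx
  have h2 := Nat.multinomial_spec f.support ⇑f
  rw [hp, hs, ← h2] at h1
  rw [mF, Finsupp.multinomial_eq]
  exact Nat.eq_of_mul_eq_mul_left (Finset.prod_pos fun i _ => Nat.factorial_pos _) h1

lemma wt_eq_sum_subset {s : Finset A} {f : A →₀ ℕ} (h : f.support ⊆ s) :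
    ∑ i ∈ s, f i = wt f := by
  rw [wt, Finsupp.sum]
  symm; apply Finset.sum_subset h
  intro x _ hnx; simpa using Finsupp.notMem_support_iff.mp hnx

open MvPolynomial in
lemma coeff_sumX_pow (s : Finset A) (n : ℕ) (d : A →₀ ℕ) :
    MvPolynomial.coeff d ((∑ a ∈ s, X a : MvPolynomial A ℂ) ^ n)
      = if wt d = n ∧ d.support ⊆ s then (mF d : ℂ) else 0 := by
  rw [Finset.sum_pow_eq_sum_piAntidiag s (fun a => (X a : MvPolynomial A ℂ)) n]
  rw [coeff_sum]
  have key : ∀ k ∈ Finset.piAntidiag s n,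
      MvPolynomial.coeff d ((Nat.multinomial s k : MvPolynomial A ℂ) * ∏ i ∈ s, X i ^ k i)
        = if (∑ i ∈ s, Finsupp.single i (k i)) = d then (Nat.multinomial s k : ℂ) else 0 := by
    intro k _
    rw [prod_X_pow, ← (map_natCast (C : ℂ →+* MvPolynomial A ℂ) (Nat.multinomial s k)),
      C_mul_monomial, mul_one, coeff_monomial]
  rw [Finset.sum_congr rfl key]
  by_cases hd : wt d = n ∧ d.support ⊆ s
  · rw [if_pos hd]
    have hdmem : (⇑d : A → ℕ) ∈ Finset.piAntidiag s n := by
      rw [Finset.mem_piAntidiag]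
      refine ⟨by rw [wt_eq_sum_subset hd.2, hd.1], fun i hi => hd.2 (Finsupp.mem_support_iff.mpr hi)⟩
    rw [Finset.sum_eq_single_of_mem (⇑d) hdmem]
    · have hds : (∑ i ∈ s, Finsupp.single i (d i)) = d := by
        rw [← Finset.sum_subset hd.2 (fun x _ hnx => by
          rw [Finsupp.notMem_support_iff.mp hnx, Finsupp.single_zero])]
        exact Finsupp.sum_single d
      rw [if_pos hds, multinomial_subset hd.2]
    · intro k hk hne
      rw [if_neg]
      intro heq
      apply hne
      funext i
      by_cases hi : i ∈ s
      · have h1 := congrArg (fun f => f i) heq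
        have h2 : d i = k i := by
          simpa [Finsupp.finset_sum_apply, Finsupp.single_apply,
            Finset.sum_ite_eq' s i (fun _ => _), hi] using h1.symm
        exact h2.symm
      · rw [Finset.mem_piAntidiag] at hk
        have h0 : k i = 0 := by by_contra h; exact hi (hk.2 i h)
        have hd0 : d i = 0 := Finsupp.notMem_support_iff.mp (fun hmem => hi (hd.2 hmem))
        rw [h0, hd0]
  · rw [if_neg hd]
    apply Finset.sum_eq_zero
    intro k hk
    rw [if_neg]
    intro heq
    apply hd
    rw [Finset.mem_piAntidiag] at hk
    have hsupp : (∑ i ∈ s, Finsupp.single i (k i)).support ⊆ s := by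
      intro a ha
      obtain ⟨i, hi, hai⟩ := Finset.mem_biUnion.mp (Finsupp.support_finset_sum ha)
      have : a = i := Finset.mem_singleton.mp (Finsupp.support_single_subset hai)
      exact this ▸ hi
    constructor
    · rw [← heq]
      have hwt : wt (∑ i ∈ s, Finsupp.single i (k i)) = ∑ i ∈ s, k i := by
        have h3 : wt (∑ i ∈ s, Finsupp.single i (k i))
            = ∑ i ∈ s, wt (Finsupp.single i (k i)) :=
          map_sum (wtHom (A := A)) (fun i => Finsupp.single i (k i)) s
        rw [h3]
        exact Finset.sum_congr rfl fun i _ => wt_single i (k i)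
      rw [hwt, hk.1]
    · rw [← heq]; exact hsupp

lemma sum_antidiagonal_eq_sum_Iic {M : Type*} [AddCommMonoid M] (μ : A →₀ ℕ)
    (f : (A →₀ ℕ) → (A →₀ ℕ) → M) :
    ∑ x ∈ Finset.HasAntidiagonal.antidiagonal μ, f x.1 x.2 = ∑ ψ ∈ Finset.Iic μ, f ψ (μ - ψ) := by
  refine Finset.sum_bij' (fun x _ => x.1) (fun ψ _ => (ψ, μ - ψ)) ?_ ?_ ?_ ?_ ?_
  · rintro ⟨a, b⟩ hx
    rw [Finset.HasAntidiagonal.mem_antidiagonal] at hx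
    simp only [Finset.mem_Iic]
    exact hx ▸ le_self_add
  · intro ψ hψ
    rw [Finset.HasAntidiagonal.mem_antidiagonal]
    exact add_tsub_cancel_of_le (Finset.mem_Iic.mp hψ)
  · rintro ⟨a, b⟩ hx
    rw [Finset.HasAntidiagonal.mem_antidiagonal] at hx
    have hb : μ - a = b := by rw [← hx]; exact add_tsub_cancel_left a b
    show (a, μ - a) = (a, b)
    rw [hb]
  · intro ψ hψ; rfl
  · rintro ⟨a, b⟩ hx
    rw [Finset.HasAntidiagonal.mem_antidiagonal] at hx
    show f a b = f a (μ - a)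
    have hb : μ - a = b := by rw [← hx]; exact add_tsub_cancel_left a b
    rw [hb]

open MvPolynomial in
lemma vandermonde (μ : A →₀ ℕ) (j : ℕ) :
    ∑ ψ ∈ Finset.Iic μ, (if wt ψ = j then (mF ψ : ℂ) * mF (μ - ψ) else 0)
      = if j ≤ wt μ then (mF μ : ℂ) else 0 := by
  by_cases hj : j ≤ wt μ
  · rw [if_pos hj]
    set s := μ.support
    set T : MvPolynomial A ℂ := ∑ a ∈ s, X a with hT
    set k := wt μ with hk
    have h1 : MvPolynomial.coeff μ (T ^ j * T ^ (k - j)) = (mF μ : ℂ) := by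
      rw [← pow_add, Nat.add_sub_cancel' hj, coeff_sumX_pow]
      rw [if_pos ⟨rfl, subset_rfl⟩]
    have h2 : MvPolynomial.coeff μ (T ^ j * T ^ (k - j))
        = ∑ ψ ∈ Finset.Iic μ, MvPolynomial.coeff ψ (T ^ j)
            * MvPolynomial.coeff (μ - ψ) (T ^ (k - j)) := by
      rw [MvPolynomial.coeff_mul]
      exact sum_antidiagonal_eq_sum_Iic μ
        (fun a c => MvPolynomial.coeff a (T ^ j) * MvPolynomial.coeff c (T ^ (k - j)))
    rw [← h1, h2]
    refine Finset.sum_congr rfl fun ψ hψ => ?_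
    have hle : ψ ≤ μ := Finset.mem_Iic.mp hψ
    by_cases hw : wt ψ = j
    · have c1 : MvPolynomial.coeff ψ (T ^ j) = (mF ψ : ℂ) := by
        rw [coeff_sumX_pow, if_pos]
        exact ⟨hw, Finsupp.support_mono hle⟩
      have c2 : MvPolynomial.coeff (μ - ψ) (T ^ (k - j)) = (mF (μ - ψ) : ℂ) := by
        rw [coeff_sumX_pow, if_pos]
        exact ⟨by rw [wt_sub hle, hw, ← hk], Finsupp.support_mono tsub_le_self⟩
      rw [c1, c2, if_pos hw]
    · have c1 : MvPolynomial.coeff ψ (T ^ j) = 0 := by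
        rw [coeff_sumX_pow, if_neg]
        exact fun h => hw h.1
      rw [c1, zero_mul, if_neg hw]
  · rw [if_neg hj]
    apply Finset.sum_eq_zero
    intro ψ hψ
    rw [if_neg]
    intro hw
    exact hj (hw ▸ wt_le (Finset.mem_Iic.mp hψ))



lemma sum_ite_const {M : Type*} [AddCommMonoid M] (C : Prop) [Decidable C]
    (s : Finset (A →₀ ℕ)) (f : (A →₀ ℕ) → M) :
    ∑ x ∈ s, (if C then f x else 0) = if C then ∑ x ∈ s, f x else 0 := by
  split <;> simp

lemma ite_smul_zero {M : Type*} [AddCommMonoid M] [Module ℂ M] (C : Prop) [Decidable C]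
    (s : ℂ) (W : M) : (if C then s • W else 0) = (if C then s else 0) • W := by
  split <;> simp

/-- erased version of `sum_Iic_swap`. -/
lemma sum_Iic_swap_erase {M : Type*} [AddCommMonoid M] (φ : A →₀ ℕ)
    (f : (A →₀ ℕ) → (A →₀ ℕ) → M) :
    ∑ ψ ∈ (Finset.Iic φ).erase 0, ∑ θ ∈ Finset.Iic (φ - ψ), f ψ θ
      = ∑ θ ∈ Finset.Iic φ, ∑ ψ ∈ (Finset.Iic (φ - θ)).erase 0, f ψ θ := by
  rw [sum_erase_zero_eq]
  have h1 : ∀ ψ ∈ Finset.Iic φ,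
      (if ψ = 0 then 0 else ∑ θ ∈ Finset.Iic (φ - ψ), f ψ θ)
        = ∑ θ ∈ Finset.Iic (φ - ψ), (if ψ = 0 then 0 else f ψ θ) := by
    intro ψ _
    split <;> simp
  rw [Finset.sum_congr rfl h1, sum_Iic_swap]
  exact Finset.sum_congr rfl fun θ _ => (sum_erase_zero_eq _ _).symm

/-- erased version of `sum_Iic_mu`. -/
lemma sum_Iic_mu_erase {M : Type*} [AddCommMonoid M] (φ : A →₀ ℕ)
    (f : (A →₀ ℕ) → (A →₀ ℕ) → M) :
    ∑ ψ ∈ (Finset.Iic φ).erase 0, ∑ θ ∈ Finset.Iic (φ - ψ), f ψ θ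
      = ∑ μ ∈ Finset.Iic φ, ∑ ψ ∈ (Finset.Iic μ).erase 0, f ψ (μ - ψ) := by
  rw [sum_erase_zero_eq]
  have h1 : ∀ ψ ∈ Finset.Iic φ,
      (if ψ = 0 then 0 else ∑ θ ∈ Finset.Iic (φ - ψ), f ψ θ)
        = ∑ θ ∈ Finset.Iic (φ - ψ), (if ψ = 0 then 0 else f ψ θ) := by
    intro ψ _
    split <;> simp
  rw [Finset.sum_congr rfl h1, sum_Iic_mu]
  exact Finset.sum_congr rfl fun μ _ => (sum_erase_zero_eq _ _).symm


lemma quad_reorder_swap {M : Type*} [AddCommMonoid M] (φ χ : A →₀ ℕ)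
    (f : (A →₀ ℕ) → (A →₀ ℕ) → (A →₀ ℕ) → (A →₀ ℕ) → M) :
    ∑ ψ₁ ∈ (Finset.Iic φ).erase 0, ∑ ψ₂ ∈ (Finset.Iic χ).erase 0,
      ∑ θ₁ ∈ Finset.Iic (φ - ψ₁), ∑ θ₂ ∈ Finset.Iic (χ - ψ₂), f ψ₁ ψ₂ θ₁ θ₂
    = ∑ θ₁ ∈ Finset.Iic φ, ∑ θ₂ ∈ Finset.Iic χ,
      ∑ ψ₁ ∈ (Finset.Iic (φ - θ₁)).erase 0, ∑ ψ₂ ∈ (Finset.Iic (χ - θ₂)).erase 0,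
        f ψ₁ ψ₂ θ₁ θ₂ := by
  have h1 : ∀ ψ₁ ∈ (Finset.Iic φ).erase 0,
      ∑ ψ₂ ∈ (Finset.Iic χ).erase 0, ∑ θ₁ ∈ Finset.Iic (φ - ψ₁),
        ∑ θ₂ ∈ Finset.Iic (χ - ψ₂), f ψ₁ ψ₂ θ₁ θ₂
      = ∑ θ₁ ∈ Finset.Iic (φ - ψ₁), ∑ ψ₂ ∈ (Finset.Iic χ).erase 0,
          ∑ θ₂ ∈ Finset.Iic (χ - ψ₂), f ψ₁ ψ₂ θ₁ θ₂ := fun ψ₁ _ => Finset.sum_comm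
  rw [Finset.sum_congr rfl h1,
    sum_Iic_swap_erase φ (fun ψ₁ θ₁ => ∑ ψ₂ ∈ (Finset.Iic χ).erase 0,
      ∑ θ₂ ∈ Finset.Iic (χ - ψ₂), f ψ₁ ψ₂ θ₁ θ₂)]
  refine Finset.sum_congr rfl fun θ₁ _ => ?_
  have h2 : ∀ ψ₁ ∈ (Finset.Iic (φ - θ₁)).erase 0,
      ∑ ψ₂ ∈ (Finset.Iic χ).erase 0, ∑ θ₂ ∈ Finset.Iic (χ - ψ₂), f ψ₁ ψ₂ θ₁ θ₂
      = ∑ θ₂ ∈ Finset.Iic χ, ∑ ψ₂ ∈ (Finset.Iic (χ - θ₂)).erase 0, f ψ₁ ψ₂ θ₁ θ₂ :=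
    fun ψ₁ _ => sum_Iic_swap_erase χ (fun ψ₂ θ₂ => f ψ₁ ψ₂ θ₁ θ₂)
  rw [Finset.sum_congr rfl h2]
  exact Finset.sum_comm

lemma quad_reorder_mu {M : Type*} [AddCommMonoid M] (φ χ : A →₀ ℕ)
    (f : (A →₀ ℕ) → (A →₀ ℕ) → (A →₀ ℕ) → (A →₀ ℕ) → M) :
    ∑ ψ₁ ∈ (Finset.Iic φ).erase 0, ∑ ψ₂ ∈ (Finset.Iic χ).erase 0,
      ∑ θ₁ ∈ Finset.Iic (φ - ψ₁), ∑ θ₂ ∈ Finset.Iic (χ - ψ₂), f ψ₁ ψ₂ θ₁ θ₂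
    = ∑ μ₁ ∈ Finset.Iic φ, ∑ μ₂ ∈ Finset.Iic χ,
      ∑ ψ₁ ∈ (Finset.Iic μ₁).erase 0, ∑ ψ₂ ∈ (Finset.Iic μ₂).erase 0,
        f ψ₁ ψ₂ (μ₁ - ψ₁) (μ₂ - ψ₂) := by
  have h1 : ∀ ψ₁ ∈ (Finset.Iic φ).erase 0,
      ∑ ψ₂ ∈ (Finset.Iic χ).erase 0, ∑ θ₁ ∈ Finset.Iic (φ - ψ₁),
        ∑ θ₂ ∈ Finset.Iic (χ - ψ₂), f ψ₁ ψ₂ θ₁ θ₂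
      = ∑ θ₁ ∈ Finset.Iic (φ - ψ₁), ∑ ψ₂ ∈ (Finset.Iic χ).erase 0,
          ∑ θ₂ ∈ Finset.Iic (χ - ψ₂), f ψ₁ ψ₂ θ₁ θ₂ := fun ψ₁ _ => Finset.sum_comm
  rw [Finset.sum_congr rfl h1,
    sum_Iic_mu_erase φ (fun ψ₁ θ₁ => ∑ ψ₂ ∈ (Finset.Iic χ).erase 0,
      ∑ θ₂ ∈ Finset.Iic (χ - ψ₂), f ψ₁ ψ₂ θ₁ θ₂)]
  refine Finset.sum_congr rfl fun μ₁ _ => ?_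
  have h2 : ∀ ψ₁ ∈ (Finset.Iic μ₁).erase 0,
      ∑ ψ₂ ∈ (Finset.Iic χ).erase 0, ∑ θ₂ ∈ Finset.Iic (χ - ψ₂), f ψ₁ ψ₂ (μ₁ - ψ₁) θ₂
      = ∑ μ₂ ∈ Finset.Iic χ, ∑ ψ₂ ∈ (Finset.Iic μ₂).erase 0,
          f ψ₁ ψ₂ (μ₁ - ψ₁) (μ₂ - ψ₂) :=
    fun ψ₁ _ => sum_Iic_mu_erase χ (fun ψ₂ θ₂ => f ψ₁ ψ₂ (μ₁ - ψ₁) θ₂)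
  rw [Finset.sum_congr rfl h2]
  exact Finset.sum_comm

lemma pull_scalar {M : Type*} [AddCommMonoid M] [Module ℂ M]
    (s t : Finset (A →₀ ℕ)) (c : ℂ) (g : (A →₀ ℕ) → (A →₀ ℕ) → ℂ) (W : M) :
    ∑ ψ₁ ∈ s, ∑ ψ₂ ∈ t, (c * g ψ₁ ψ₂) • W
      = (c * ∑ ψ₁ ∈ s, ∑ ψ₂ ∈ t, g ψ₁ ψ₂) • W := by
  rw [Finset.mul_sum, Finset.sum_smul]
  refine Finset.sum_congr rfl fun ψ₁ _ => ?_
  rw [Finset.mul_sum, Finset.sum_smul]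

lemma pull_smul_mul {R : Type*} [Ring R] [Module ℂ R]
    (s t : Finset (A →₀ ℕ)) (a : ℂ) (u : (A →₀ ℕ) → (A →₀ ℕ) → R) (e : R) :
    ∑ ψ₁ ∈ s, ∑ ψ₂ ∈ t, a • (u ψ₁ ψ₂ * e)
      = a • ((∑ ψ₁ ∈ s, ∑ ψ₂ ∈ t, u ψ₁ ψ₂) * e) := by
  rw [Finset.sum_mul, Finset.smul_sum]
  refine Finset.sum_congr rfl fun ψ₁ _ => ?_
  rw [Finset.sum_mul, Finset.smul_sum]

lemma pull_smul_mul_left {R : Type*} [Ring R] [Module ℂ R]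
    (s t : Finset (A →₀ ℕ)) (a : ℂ) (u : (A →₀ ℕ) → (A →₀ ℕ) → R) (e : R) :
    ∑ ψ₁ ∈ s, ∑ ψ₂ ∈ t, a • (e * u ψ₁ ψ₂)
      = a • (e * (∑ ψ₁ ∈ s, ∑ ψ₂ ∈ t, u ψ₁ ψ₂)) := by
  rw [Finset.mul_sum, Finset.smul_sum]
  refine Finset.sum_congr rfl fun ψ₁ _ => ?_
  rw [Finset.mul_sum, Finset.smul_sum]

lemma sub_sub_sub_cancel_left {ψ μ φ : A →₀ ℕ} (h1 : ψ ≤ μ) :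
    (φ - ψ) - (μ - ψ) = φ - μ := by
  rw [tsub_tsub, add_tsub_cancel_of_le h1]

end Prelude

variable {L : Type*} [LieRing L] [LieAlgebra ℂ L]

instance : LieAlgebra ℂ (A ⊗[ℂ] L) where
  lie_smul c x y := by
    rw [← algebraMap_smul A c y, lie_smul, algebraMap_smul]

/-- The universal enveloping algebra `U(L ⊗ A)` of the map algebra `L ⊗ A`
(realized as `A ⊗[ℂ] L` with bracket `[a ⊗ z, b ⊗ z'] = ab ⊗ [z,z']`). -/
abbrev UEA (A : Type*) [CommRing A] [Algebra ℂ A]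
    (L : Type*) [LieRing L] [LieAlgebra ℂ L] : Type _ :=
  UniversalEnvelopingAlgebra ℂ (A ⊗[ℂ] L)

/-- The element `v ⊗ a` of the map algebra, viewed inside `U(L ⊗ A)`. -/
def el (a : A) (v : L) : UEA A L :=
  UniversalEnvelopingAlgebra.ι ℂ (a ⊗ₜ[ℂ] v)

lemma commute_el (a b : A) (v : L) : Commute (el a v : UEA A L) (el b v) := by
  letI : LieRing (UEA A L) := LieRing.ofAssociativeRing
  have h := (UniversalEnvelopingAlgebra.ι ℂ (L := A ⊗[ℂ] L)).map_lie (a ⊗ₜ[ℂ] v) (b ⊗ₜ[ℂ] v)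
  rw [LieAlgebra.ExtendScalars.bracket_tmul, lie_self, TensorProduct.tmul_zero, map_zero,
    Ring.lie_def] at h
  exact (sub_eq_zero.mp h.symm)

lemma commute_dp {S : Type*} [Ring S] [Algebra ℂ S] {u w : S} (h : Commute u w)
    (r s : ℕ) : Commute (dp u r) (dp w s) :=
  ((h.pow_pow r s).smul_left _).smul_right _

/-- `x^±(ψ) = ∏_a (x^± ⊗ a)^{(ψ(a))}` (generic in the element `v` of `L`);
the factors pairwise commute, so the product is unambiguous. -/
def xProd (v : L) (ψ : A →₀ ℕ) : UEA A L :=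
  ψ.support.noncommProd (fun a => dp (el a v) (ψ a))
    (fun a _ b _ _ => commute_dp (commute_el a b v) _ _)

/-- the predicate characterizing the recursively defined family
`p : F × F → U(L ⊗ A)` (relative to a choice `v` playing the role of `h`). -/
def IsP (v : L) (p : (A →₀ ℕ) → (A →₀ ℕ) → UEA A L) : Prop :=
  p 0 0 = 1 ∧
  (∀ φ χ, wt φ ≠ wt χ → p φ χ = 0) ∧
  (∀ φ χ, φ ≠ 0 → χ ≠ 0 → wt φ = wt χ →
    p φ χ = -((wt φ : ℂ)⁻¹) •
      ∑ ψ₁ ∈ (Finset.Iic φ).erase 0, ∑ ψ₂ ∈ (Finset.Iic χ).erase 0,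
        ((mF ψ₁ * mF ψ₂ : ℕ) : ℂ) • (el (piF ψ₁ * piF ψ₂) v * p (φ - ψ₁) (χ - ψ₂)))

/-- `p(χ) = p(χ, |χ|·χ₁)`. -/
def pOne (p : (A →₀ ℕ) → (A →₀ ℕ) → UEA A L) (χ : A →₀ ℕ) : UEA A L :=
  p χ (Finsupp.single (1 : A) (wt χ))

/-- the predicate characterizing the recursively defined family
`D^± : F³ → U(L ⊗ A)` (relative to a choice `v` playing the role of `x^±`). -/
def IsD (v : L) (D : (A →₀ ℕ) → (A →₀ ℕ) → (A →₀ ℕ) → UEA A L) : Prop :=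
  (D 0 0 0 = 1) ∧
  (∀ ψ₁ ψ₂ : A →₀ ℕ, ¬(ψ₁ = 0 ∧ ψ₂ = 0) → D ψ₁ ψ₂ 0 = 0) ∧
  (∀ (ψ₁ ψ₂ : A →₀ ℕ) (b : A), D ψ₁ ψ₂ (Finsupp.single b 1) =
      if wt ψ₁ = wt ψ₂ then ((mF ψ₁ * mF ψ₂ : ℕ) : ℂ) • el (b * (piF ψ₁ * piF ψ₂)) v
      else 0) ∧
  (∀ ψ₁ ψ₂ ψ₃ : A →₀ ℕ, 2 ≤ wt ψ₃ →
    D ψ₁ ψ₂ ψ₃ = (wt ψ₃ : ℂ)⁻¹ •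
      ∑ φ₁ ∈ Finset.Iic ψ₁, ∑ φ₂ ∈ Finset.Iic ψ₂, ∑ b ∈ ψ₃.support,
        D φ₁ φ₂ (Finsupp.single b 1) *
          D (ψ₁ - φ₁) (ψ₂ - φ₂) (ψ₃ - Finsupp.single b 1))

/-- `𝔻(ψ₁,ψ₂,ψ₃) = Σ_{φ₁≤ψ₁} Σ_{φ₂≤ψ₂} p(φ₁,φ₂) D⁺(ψ₁−φ₁,ψ₂−φ₂,ψ₃)`. -/
def DD (p : (A →₀ ℕ) → (A →₀ ℕ) → UEA A L)
    (Dp : (A →₀ ℕ) → (A →₀ ℕ) → (A →₀ ℕ) → UEA A L)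
    (ψ₁ ψ₂ ψ₃ : A →₀ ℕ) : UEA A L :=
  ∑ φ₁ ∈ Finset.Iic ψ₁, ∑ φ₂ ∈ Finset.Iic ψ₂,
    p φ₁ φ₂ * Dp (ψ₁ - φ₁) (ψ₂ - φ₂) ψ₃

/-- the Lie algebra `sl₂` presented by a basis `x⁻ = b 0`, `h = b 1`, `x⁺ = b 2`
with `[h,x^±] = ±2x^±`, `[x⁺,x⁻] = h`. -/
structure Sl2Data (L : Type*) [LieRing L] [LieAlgebra ℂ L] where
  b : Module.Basis (Fin 3) ℂ L
  lie_h_xp : ⁅b 1, b 2⁆ = (2 : ℂ) • b 2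
  lie_h_xm : ⁅b 1, b 0⁆ = (-2 : ℂ) • b 0
  lie_xp_xm : ⁅b 2, b 0⁆ = b 1

/-- `x⁻`. -/
def Sl2Data.xm (S : Sl2Data L) : L := S.b 0
/-- `h`. -/
def Sl2Data.h (S : Sl2Data L) : L := S.b 1
/-- `x⁺`. -/
def Sl2Data.xp (S : Sl2Data L) : L := S.b 2

/-- The data of a root system and Chevalley basis for a (finite-dimensional simple)
complex Lie algebra `g`: a Cartan subalgebra `H`, the roots `R`, the positive roots
`Rpos` enumerated as `β 0, …, β (m-1)`, simple roots `α 0, …, α (n-1)`, root vectors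
`x s γ` (`s = true` for `x_γ⁺`, `s = false` for `x_γ⁻`), coroots, integral Cartan
pairing, and structure constants `±(p+1)`. -/
structure ChevalleyData (g : Type*) [LieRing g] [LieAlgebra ℂ g] where
  n : ℕ
  m : ℕ
  H : LieSubalgebra ℂ g
  cartan : H.IsCartanSubalgebra
  R : Set (Module.Dual ℂ H)
  Rpos : Set (Module.Dual ℂ H)
  β : Fin m → Module.Dual ℂ H
  β_inj : Function.Injective β
  Rpos_eq : Rpos = Set.range β
  α : Fin n → Module.Dual ℂ H
  α_mem : ∀ i, α i ∈ Rpos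
  R_eq : R = Rpos ∪ (fun γ => -γ) '' Rpos
  x : Bool → Module.Dual ℂ H → g
  coroot : Module.Dual ℂ H → H
  chevBasis : Module.Basis ((Fin m × Bool) ⊕ Fin n) ℂ g
  chevBasis_x : ∀ (k : Fin m) (s : Bool), chevBasis (Sum.inl (k, s)) = x s (β k)
  chevBasis_h : ∀ i : Fin n, chevBasis (Sum.inr i) = (coroot (α i) : g)
  rootvec_pos : ∀ γ ∈ Rpos, ∀ t : H, ⁅(t : g), x true γ⁆ = γ t • x true γ
  rootvec_neg : ∀ γ ∈ Rpos, ∀ t : H, ⁅(t : g), x false γ⁆ = -(γ t) • x false γ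
  coroot_def : ∀ γ ∈ Rpos, ⁅x true γ, x false γ⁆ = (coroot γ : g)
  pairing : Module.Dual ℂ H → Module.Dual ℂ H → ℤ
  pairing_eq : ∀ γ ∈ Rpos, ∀ δ ∈ R, δ (coroot γ) = (pairing γ δ : ℂ)
  pairing_self : ∀ γ ∈ Rpos, pairing γ γ = 2
  struct : ∀ γ δ, γ ∈ Rpos → δ ∈ Rpos → γ + δ ∈ R → ∃ (c : ℤ) (pm : ℕ),
    (δ - (pm : ℤ) • γ ∈ R) ∧ (∀ q : ℕ, δ - (q : ℤ) • γ ∈ R → q ≤ pm) ∧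
    (c = pm + 1 ∨ c = -(pm + 1)) ∧
    ⁅x true γ, x true δ⁆ = (c : ℂ) • x true (γ + δ) ∧
    ⁅x false γ, x false δ⁆ = (-c : ℂ) • x false (γ + δ)

/-- `ψ ∈ F(𝔹)`: the multiset `ψ` is supported on the basis `𝔹 = range bA` of `A`. -/
def SuppB {ιA : Type*} (bA : Module.Basis ιA ℂ A) (ψ : A →₀ ℕ) : Prop :=
  ∀ a ∈ ψ.support, a ∈ Set.range bA

variable {g : Type*} [LieRing g] [LieAlgebra ℂ g]

/-- The integral form `U_ℤ(g ⊗ A)`: the `ℤ`-subalgebra of `U(g ⊗ A)` generated by all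
divided powers `(x_α^± ⊗ b)^{(r)}`, `α ∈ R⁺`, `b ∈ 𝔹`, `r ∈ ℕ`. -/
def UZ (C : ChevalleyData g) {ιA : Type*} (bA : Module.Basis ιA ℂ A) : Subalgebra ℤ (UEA A g) :=
  Algebra.adjoin ℤ {u : UEA A g | ∃ (k : Fin C.m) (s : Bool) (i : ιA) (r : ℕ),
    u = dp (el (bA i) (C.x s (C.β k))) r}

/-- `U_ℤ^±(g ⊗ A)` (one sign `s` only). -/
def UZpm (C : ChevalleyData g) {ιA : Type*} (bA : Module.Basis ιA ℂ A) (s : Bool) :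
    Subalgebra ℤ (UEA A g) :=
  Algebra.adjoin ℤ {u : UEA A g | ∃ (k : Fin C.m) (i : ιA) (r : ℕ),
    u = dp (el (bA i) (C.x s (C.β k))) r}


/-- generalized binomial coefficient `C(z,k) = z(z-1)⋯(z-k+1)/k!` (as a complex scalar). -/
def cchoose (z : ℂ) (k : ℕ) : ℂ :=
  (k.factorial : ℂ)⁻¹ * ∏ j ∈ Finset.range k, (z - (j : ℂ))

section CChoose
variable {A : Type*} [CommRing A] [Algebra ℂ A]

@[simp] lemma cchoose_zero (z : ℂ) : cchoose z 0 = 1 := by simp [cchoose]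

lemma cchoose_succ (z : ℂ) (k : ℕ) :
    ((k : ℂ) + 1) * cchoose z (k + 1) = z * cchoose (z - 1) k := by
  rw [cchoose, cchoose, Finset.prod_range_succ']
  have h1 : ∀ j ∈ Finset.range k, z - ((j : ℕ) + 1 : ℕ) = (z - 1) - (j : ℂ) := by
    intro j _; push_cast; ring
  rw [Finset.prod_congr rfl h1, Nat.factorial_succ]
  have hk : ((k : ℂ) + 1) ≠ 0 := Nat.cast_add_one_ne_zero k
  have hf : ((k.factorial : ℂ)) ≠ 0 := Nat.cast_ne_zero.mpr (Nat.factorial_ne_zero k)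
  push_cast
  field_simp
  ring

lemma sum_cchoose (z : ℂ) (k : ℕ) :
    z * ∑ i ∈ Finset.range k, cchoose (z + (i : ℂ) - 1) i
      = (k : ℂ) * cchoose (z + (k : ℂ) - 1) k := by
  induction k with
  | zero => simp
  | succ k ih =>
    rw [Finset.sum_range_succ, mul_add, ih]
    have habs : ((k : ℂ) + 1) * cchoose (z + (k : ℂ)) (k + 1)
        = (z + (k : ℂ)) * cchoose (z + (k : ℂ) - 1) k := cchoose_succ _ k
    push_cast
    have : z + ((k : ℂ) + 1) - 1 = z + (k : ℂ) := by ring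
    rw [this, habs]
    ring

lemma sum_shift (c : ℂ) (k : ℕ) :
    ∑ j ∈ Finset.range (k + 1),
        (if j = 0 then (0 : ℂ) else cchoose (c + ((k - j : ℕ) : ℂ) - 1) (k - j))
      = ∑ i ∈ Finset.range k, cchoose (c + (i : ℂ) - 1) i := by
  rw [Finset.sum_range_succ', if_pos rfl, add_zero]
  refine (Finset.sum_congr rfl fun j _ => ?_).trans
    (Finset.sum_range_reflect (fun i => cchoose (c + (i : ℂ) - 1) i) k)
  rw [if_neg (Nat.succ_ne_zero j)]
  have h2 : k - (j + 1) = k - 1 - j := by omega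
  rw [h2]



/-- the key scalar sum: two-variable Vandermonde convolution with hockey stick weights. -/
lemma inner_scalar_sum (c : ℂ) (μ₁ μ₂ : A →₀ ℕ) (hk : wt μ₁ = wt μ₂) :
    ∑ ψ₁ ∈ (Finset.Iic μ₁).erase 0, ∑ ψ₂ ∈ (Finset.Iic μ₂).erase 0,
      (if wt (μ₁ - ψ₁) = wt (μ₂ - ψ₂) then
        cchoose (c + (wt (μ₁ - ψ₁) : ℂ) - 1) (wt (μ₁ - ψ₁))
          * ((mF (μ₁ - ψ₁) * mF (μ₂ - ψ₂) : ℕ) : ℂ) * ((mF ψ₁ * mF ψ₂ : ℕ) : ℂ)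
      else 0)
    = (∑ i ∈ Finset.range (wt μ₁), cchoose (c + (i : ℂ) - 1) i) * (mF μ₁ : ℂ) * (mF μ₂ : ℂ) := by
  have hstep : ∑ ψ₁ ∈ (Finset.Iic μ₁).erase 0, ∑ ψ₂ ∈ (Finset.Iic μ₂).erase 0,
      (if wt (μ₁ - ψ₁) = wt (μ₂ - ψ₂) then
        cchoose (c + (wt (μ₁ - ψ₁) : ℂ) - 1) (wt (μ₁ - ψ₁))
          * ((mF (μ₁ - ψ₁) * mF (μ₂ - ψ₂) : ℕ) : ℂ) * ((mF ψ₁ * mF ψ₂ : ℕ) : ℂ)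
      else 0)
      = ∑ ψ₁ ∈ Finset.Iic μ₁, ∑ ψ₂ ∈ Finset.Iic μ₂,
        (if wt ψ₁ = wt ψ₂ then
          (if wt ψ₁ = 0 then 0
            else cchoose (c + ((wt μ₁ - wt ψ₁ : ℕ) : ℂ) - 1) (wt μ₁ - wt ψ₁))
            * ((mF ψ₁ : ℂ) * (mF (μ₁ - ψ₁) : ℂ))
            * ((mF ψ₂ : ℂ) * (mF (μ₂ - ψ₂) : ℂ))
        else 0) := by
    rw [sum_erase_zero_eq]
    refine Finset.sum_congr rfl fun ψ₁ hψ₁ => ?_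
    have hle₁ : ψ₁ ≤ μ₁ := Finset.mem_Iic.mp hψ₁
    have hw₁ : wt ψ₁ ≤ wt μ₁ := wt_le hle₁
    rw [show (if ψ₁ = 0 then 0 else ∑ ψ₂ ∈ (Finset.Iic μ₂).erase 0,
        (if wt (μ₁ - ψ₁) = wt (μ₂ - ψ₂) then
          cchoose (c + (wt (μ₁ - ψ₁) : ℂ) - 1) (wt (μ₁ - ψ₁))
            * ((mF (μ₁ - ψ₁) * mF (μ₂ - ψ₂) : ℕ) : ℂ) * ((mF ψ₁ * mF ψ₂ : ℕ) : ℂ)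
        else 0))
        = ∑ ψ₂ ∈ (Finset.Iic μ₂).erase 0, (if ψ₁ = 0 then 0 else
          (if wt (μ₁ - ψ₁) = wt (μ₂ - ψ₂) then
            cchoose (c + (wt (μ₁ - ψ₁) : ℂ) - 1) (wt (μ₁ - ψ₁))
              * ((mF (μ₁ - ψ₁) * mF (μ₂ - ψ₂) : ℕ) : ℂ) * ((mF ψ₁ * mF ψ₂ : ℕ) : ℂ)
          else 0)) from by split <;> simp]
    rw [sum_erase_zero_eq]
    refine Finset.sum_congr rfl fun ψ₂ hψ₂ => ?_
    have hle₂ : ψ₂ ≤ μ₂ := Finset.mem_Iic.mp hψ₂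
    have hw₂ : wt ψ₂ ≤ wt μ₂ := wt_le hle₂
    have hcond : (wt (μ₁ - ψ₁) = wt (μ₂ - ψ₂)) ↔ (wt ψ₁ = wt ψ₂) := by
      rw [wt_sub hle₁, wt_sub hle₂]
      omega
    by_cases h2 : ψ₂ = 0
    · subst h2
      rw [if_pos rfl]
      by_cases hww : wt ψ₁ = wt (0 : A →₀ ℕ)
      · have h10 : wt ψ₁ = 0 := by simpa using hww
        rw [if_pos hww, if_pos h10, zero_mul, zero_mul]
      · rw [if_neg hww]
    · rw [if_neg h2]
      by_cases h1 : ψ₁ = 0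
      · subst h1
        rw [if_pos rfl]
        by_cases hww : wt (0 : A →₀ ℕ) = wt ψ₂
        · exact absurd (wt_eq_zero.mp (by simpa using hww.symm)) h2
        · rw [if_neg hww]
      · rw [if_neg h1]
        by_cases hww : wt ψ₁ = wt ψ₂
        · rw [if_pos (hcond.mpr hww), if_pos hww,
            if_neg (fun h => h1 (wt_eq_zero.mp h)), wt_sub hle₁]
          push_cast
          ring
        · rw [if_neg (fun h => hww (hcond.mp h)), if_neg hww]
  rw [hstep]
  have hmaps : ∀ ψ₁ ∈ Finset.Iic μ₁, wt ψ₁ ∈ Finset.range (wt μ₁ + 1) := fun ψ₁ hψ₁ =>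
    Finset.mem_range.mpr (Nat.lt_succ_of_le (wt_le (Finset.mem_Iic.mp hψ₁)))
  rw [← Finset.sum_fiberwise_of_maps_to hmaps]
  have hfiber : ∀ j ∈ Finset.range (wt μ₁ + 1),
      (∑ ψ₁ ∈ (Finset.Iic μ₁).filter (fun ψ₁ => wt ψ₁ = j), ∑ ψ₂ ∈ Finset.Iic μ₂,
        (if wt ψ₁ = wt ψ₂ then
          (if wt ψ₁ = 0 then 0
            else cchoose (c + ((wt μ₁ - wt ψ₁ : ℕ) : ℂ) - 1) (wt μ₁ - wt ψ₁))
            * ((mF ψ₁ : ℂ) * (mF (μ₁ - ψ₁) : ℂ))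
            * ((mF ψ₂ : ℂ) * (mF (μ₂ - ψ₂) : ℂ))
        else 0))
      = (if j = 0 then 0
          else cchoose (c + ((wt μ₁ - j : ℕ) : ℂ) - 1) (wt μ₁ - j)) * ((mF μ₁ : ℂ) * (mF μ₂ : ℂ)) := by
    intro j hj
    have hjk : j ≤ wt μ₁ := Nat.lt_succ_iff.mp (Finset.mem_range.mp hj)
    have hinner : ∀ ψ₁ ∈ (Finset.Iic μ₁).filter (fun ψ₁ => wt ψ₁ = j),
        (∑ ψ₂ ∈ Finset.Iic μ₂,
          (if wt ψ₁ = wt ψ₂ then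
            (if wt ψ₁ = 0 then 0
              else cchoose (c + ((wt μ₁ - wt ψ₁ : ℕ) : ℂ) - 1) (wt μ₁ - wt ψ₁))
              * ((mF ψ₁ : ℂ) * (mF (μ₁ - ψ₁) : ℂ))
              * ((mF ψ₂ : ℂ) * (mF (μ₂ - ψ₂) : ℂ))
          else 0))
        = ((if j = 0 then 0
            else cchoose (c + ((wt μ₁ - j : ℕ) : ℂ) - 1) (wt μ₁ - j))
            * ((mF ψ₁ : ℂ) * (mF (μ₁ - ψ₁) : ℂ))) * (mF μ₂ : ℂ) := by
      intro ψ₁ hψ₁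
      have hwj : wt ψ₁ = j := (Finset.mem_filter.mp hψ₁).2
      have e1 : ∀ ψ₂ ∈ Finset.Iic μ₂,
          (if wt ψ₁ = wt ψ₂ then
            (if wt ψ₁ = 0 then 0
              else cchoose (c + ((wt μ₁ - wt ψ₁ : ℕ) : ℂ) - 1) (wt μ₁ - wt ψ₁))
              * ((mF ψ₁ : ℂ) * (mF (μ₁ - ψ₁) : ℂ))
              * ((mF ψ₂ : ℂ) * (mF (μ₂ - ψ₂) : ℂ))
          else 0)
          = ((if j = 0 then 0
              else cchoose (c + ((wt μ₁ - j : ℕ) : ℂ) - 1) (wt μ₁ - j))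
              * ((mF ψ₁ : ℂ) * (mF (μ₁ - ψ₁) : ℂ)))
            * (if wt ψ₂ = j then (mF ψ₂ : ℂ) * (mF (μ₂ - ψ₂) : ℂ) else 0) := by
        intro ψ₂ _
        by_cases hw2 : wt ψ₂ = j
        · rw [if_pos (by rw [hwj, hw2]), if_pos hw2, hwj]
          try ring
        · rw [if_neg (by rw [hwj]; exact fun h => hw2 h.symm), if_neg hw2, mul_zero]
      rw [Finset.sum_congr rfl e1, ← Finset.mul_sum, vandermonde μ₂ j,
        if_pos (by omega : j ≤ wt μ₂)]
    rw [Finset.sum_congr rfl hinner]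
    have e2 : ∀ ψ₁ ∈ (Finset.Iic μ₁).filter (fun ψ₁ => wt ψ₁ = j),
        ((if j = 0 then 0
            else cchoose (c + ((wt μ₁ - j : ℕ) : ℂ) - 1) (wt μ₁ - j))
            * ((mF ψ₁ : ℂ) * (mF (μ₁ - ψ₁) : ℂ))) * (mF μ₂ : ℂ)
        = ((if j = 0 then 0
            else cchoose (c + ((wt μ₁ - j : ℕ) : ℂ) - 1) (wt μ₁ - j)) * (mF μ₂ : ℂ))
          * ((mF ψ₁ : ℂ) * (mF (μ₁ - ψ₁) : ℂ)) := fun ψ₁ _ => by ring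
    rw [Finset.sum_congr rfl e2, ← Finset.mul_sum, Finset.sum_filter, vandermonde μ₁ j,
      if_pos hjk]
    ring
  rw [Finset.sum_congr rfl hfiber, ← Finset.sum_mul, sum_shift c (wt μ₁)]
  ring

end CChoose

/-- the (finite) set `P_k(ψ)` of partitions of `ψ` into `k` parts,
i.e. finitely supported `χ : F → ℕ` with `Σ_φ χ(φ)·φ = ψ` and `Σ_φ χ(φ) = k`. -/
def partitions (ψ : A →₀ ℕ) (k : ℕ) : Finset ((A →₀ ℕ) →₀ ℕ) :=
  (Finset.Iic ((Finset.Iic ψ).sum fun φ => Finsupp.single φ k)).filter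
    (fun χ => (χ.sum fun φ c => c • φ) = ψ ∧ (χ.sum fun _ c => c) = k)

/-- the (finite) set `S_k(χ)` of finitely supported `ψ : F → ℕ` with
`Σ_φ ψ(φ)·φ ≤ χ` and `Σ_φ ψ(φ) = k`. -/
def subPartitions (χ : A →₀ ℕ) (k : ℕ) : Finset ((A →₀ ℕ) →₀ ℕ) :=
  (Finset.Iic ((Finset.Iic χ).sum fun φ => Finsupp.single φ k)).filter
    (fun ψ => (ψ.sum fun φ c => c • φ) ≤ χ ∧ (ψ.sum fun _ c => c) = k)

/-- `U_ℤ^0(g ⊗ A)`: the `ℤ`-subalgebra generated by the `p_i(χ)`, `χ ∈ F(𝔹)`,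
where `P i` is the family `p_i` (defined by recursion relative to `h_{α_i}`). -/
def UZ0 (C : ChevalleyData g) {ιA : Type*} (bA : Module.Basis ιA ℂ A)
    (P : Fin C.n → (A →₀ ℕ) → (A →₀ ℕ) → UEA A g) : Subalgebra ℤ (UEA A g) :=
  Algebra.adjoin ℤ {u : UEA A g | ∃ (i : Fin C.n) (χ : A →₀ ℕ), SuppB bA χ ∧ u = pOne (P i) χ}

section KeyLemma

variable {A : Type*} [CommRing A] [Algebra ℂ A]
variable {L : Type*} [LieRing L] [LieAlgebra ℂ L]

lemma el_bracket {v w : L} {cc : ℂ} (h : ⁅v, w⁆ = cc • w) (a b : A) :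
    cc • el (a * b) w = el a v * el b w - el b w * el a v := by
  letI : LieRing (UEA A L) := LieRing.ofAssociativeRing
  have hh := (UniversalEnvelopingAlgebra.ι ℂ (L := A ⊗[ℂ] L)).map_lie (a ⊗ₜ[ℂ] v) (b ⊗ₜ[ℂ] w)
  rw [LieAlgebra.ExtendScalars.bracket_tmul, h, TensorProduct.tmul_smul, map_smul,
    Ring.lie_def] at hh
  exact hh

lemma el_swap₁ {v w : L} {cc : ℂ} (h : ⁅v, w⁆ = cc • w) (a b : A) :
    el b w * el a v = el a v * el b w - cc • el (a * b) w := by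
  rw [el_bracket h a b, sub_sub_cancel]

lemma el_swap₂ {v w : L} {cc : ℂ} (h : ⁅v, w⁆ = cc • w) (a b : A) :
    el a v * el b w = el b w * el a v + cc • el (a * b) w := by
  rw [el_bracket h a b]
  abel

lemma isP_resum {H : L} {P : (A →₀ ℕ) → (A →₀ ℕ) → UEA A L} (hP : IsP H P)
    (φ χ : A →₀ ℕ) (hwt : wt φ = wt χ) :
    ∑ ψ₁ ∈ (Finset.Iic φ).erase 0, ∑ ψ₂ ∈ (Finset.Iic χ).erase 0,
      ((mF ψ₁ * mF ψ₂ : ℕ) : ℂ) • (el (piF ψ₁ * piF ψ₂) H * P (φ - ψ₁) (χ - ψ₂))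
      = (-(wt φ : ℂ)) • P φ χ := by
  by_cases hφ : φ = 0
  · subst hφ
    rw [Iic_zero]
    simp
  · have hχ : χ ≠ 0 := fun h => hφ (wt_eq_zero.mp (by rw [hwt, h, wt_zero]))
    have hrec := hP.2.2 φ χ hφ hχ hwt
    have hN : ((wt φ : ℂ)) ≠ 0 := Nat.cast_ne_zero.mpr (fun h => hφ (wt_eq_zero.mp h))
    rw [hrec, smul_smul]
    rw [show (-(wt φ : ℂ)) * -(wt φ : ℂ)⁻¹ = 1 by
      rw [neg_mul_neg, mul_inv_cancel₀ hN], one_smul]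

lemma key (H X Xm : L) (c : ℂ)
    (hX : ⁅H, X⁆ = c • X) (hXm : ⁅H, Xm⁆ = -c • Xm)
    (P : (A →₀ ℕ) → (A →₀ ℕ) → UEA A L) (hP : IsP H P) :
    ∀ n : ℕ, ∀ φ χ : A →₀ ℕ, wt φ + wt χ ≤ n → ∀ b : A,
      (el b X * P φ χ = ∑ ψ₁ ∈ Finset.Iic φ, ∑ ψ₂ ∈ Finset.Iic χ,
        if wt ψ₁ = wt ψ₂ then
          (cchoose (c + (wt ψ₁ : ℂ) - 1) (wt ψ₁) * ((mF ψ₁ * mF ψ₂ : ℕ) : ℂ)) •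
            (P (φ - ψ₁) (χ - ψ₂) * el (b * (piF ψ₁ * piF ψ₂)) X)
        else 0) ∧
      (P φ χ * el b Xm = ∑ ψ₁ ∈ Finset.Iic φ, ∑ ψ₂ ∈ Finset.Iic χ,
        if wt ψ₁ = wt ψ₂ then
          (cchoose (c + (wt ψ₁ : ℂ) - 1) (wt ψ₁) * ((mF ψ₁ * mF ψ₂ : ℕ) : ℂ)) •
            (el (b * (piF ψ₁ * piF ψ₂)) Xm * P (φ - ψ₁) (χ - ψ₂))
        else 0) := by
  have base : ∀ b : A, (el b X * P 0 0 = ∑ ψ₁ ∈ Finset.Iic (0 : A →₀ ℕ),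
        ∑ ψ₂ ∈ Finset.Iic (0 : A →₀ ℕ),
        if wt ψ₁ = wt ψ₂ then
          (cchoose (c + (wt ψ₁ : ℂ) - 1) (wt ψ₁) * ((mF ψ₁ * mF ψ₂ : ℕ) : ℂ)) •
            (P ((0 : A →₀ ℕ) - ψ₁) ((0 : A →₀ ℕ) - ψ₂) * el (b * (piF ψ₁ * piF ψ₂)) X)
        else 0) ∧
      (P 0 0 * el b Xm = ∑ ψ₁ ∈ Finset.Iic (0 : A →₀ ℕ), ∑ ψ₂ ∈ Finset.Iic (0 : A →₀ ℕ),
        if wt ψ₁ = wt ψ₂ then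
          (cchoose (c + (wt ψ₁ : ℂ) - 1) (wt ψ₁) * ((mF ψ₁ * mF ψ₂ : ℕ) : ℂ)) •
            (el (b * (piF ψ₁ * piF ψ₂)) Xm * P ((0 : A →₀ ℕ) - ψ₁) ((0 : A →₀ ℕ) - ψ₂))
        else 0) := by
    intro b
    rw [Iic_zero]
    constructor
    · rw [Finset.sum_singleton, Finset.sum_singleton, if_pos rfl]
      simp [hP.1]
    · rw [Finset.sum_singleton, Finset.sum_singleton, if_pos rfl]
      simp [hP.1]
  have hzero : ∀ φ χ : A →₀ ℕ, wt φ ≠ wt χ → ∀ b : A,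
      (el b X * P φ χ = ∑ ψ₁ ∈ Finset.Iic φ, ∑ ψ₂ ∈ Finset.Iic χ,
        if wt ψ₁ = wt ψ₂ then
          (cchoose (c + (wt ψ₁ : ℂ) - 1) (wt ψ₁) * ((mF ψ₁ * mF ψ₂ : ℕ) : ℂ)) •
            (P (φ - ψ₁) (χ - ψ₂) * el (b * (piF ψ₁ * piF ψ₂)) X)
        else 0) ∧
      (P φ χ * el b Xm = ∑ ψ₁ ∈ Finset.Iic φ, ∑ ψ₂ ∈ Finset.Iic χ,
        if wt ψ₁ = wt ψ₂ then
          (cchoose (c + (wt ψ₁ : ℂ) - 1) (wt ψ₁) * ((mF ψ₁ * mF ψ₂ : ℕ) : ℂ)) •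
            (el (b * (piF ψ₁ * piF ψ₂)) Xm * P (φ - ψ₁) (χ - ψ₂))
        else 0) := by
    intro φ χ hne b
    have hterm : ∀ ψ₁ ∈ Finset.Iic φ, ∀ ψ₂ ∈ Finset.Iic χ, wt ψ₁ = wt ψ₂ →
        P (φ - ψ₁) (χ - ψ₂) = 0 := by
      intro ψ₁ h1 ψ₂ h2 hww
      apply hP.2.1
      have l1 := wt_le (Finset.mem_Iic.mp h1)
      have l2 := wt_le (Finset.mem_Iic.mp h2)
      rw [wt_sub (Finset.mem_Iic.mp h1), wt_sub (Finset.mem_Iic.mp h2)]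
      omega
    constructor
    · rw [hP.2.1 φ χ hne, mul_zero]
      symm
      refine Finset.sum_eq_zero fun ψ₁ h1 => Finset.sum_eq_zero fun ψ₂ h2 => ?_
      by_cases hc : wt ψ₁ = wt ψ₂
      · rw [if_pos hc, hterm ψ₁ h1 ψ₂ h2 hc, zero_mul, smul_zero]
      · rw [if_neg hc]
    · rw [hP.2.1 φ χ hne, zero_mul]
      symm
      refine Finset.sum_eq_zero fun ψ₁ h1 => Finset.sum_eq_zero fun ψ₂ h2 => ?_
      by_cases hc : wt ψ₁ = wt ψ₂
      · rw [if_pos hc, hterm ψ₁ h1 ψ₂ h2 hc, mul_zero, smul_zero]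
      · rw [if_neg hc]
  intro n
  induction n with
  | zero =>
    intro φ χ hle b
    have hφ : φ = 0 := wt_eq_zero.mp (by omega)
    have hχ : χ = 0 := wt_eq_zero.mp (by omega)
    subst hφ; subst hχ
    exact base b
  | succ n IH =>
    intro φ χ hle b
    by_cases hwt : wt φ = wt χ
    · by_cases hφ0 : φ = 0
      · have hχ0 : χ = 0 := by
          subst hφ0
          exact wt_eq_zero.mp (by simpa using hwt.symm)
        subst hφ0; subst hχ0
        exact base b
      · -- main inductive step
        have hχ0 : χ ≠ 0 := fun h => hφ0 (wt_eq_zero.mp (by rw [hwt, h, wt_zero]))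
        have hN : ((wt φ : ℂ)) ≠ 0 := Nat.cast_ne_zero.mpr
          (fun h => hφ0 (wt_eq_zero.mp h))
        have hrec := hP.2.2 φ χ hφ0 hχ0 hwt
        have hdec : ∀ ψ₁ ∈ (Finset.Iic φ).erase 0, ∀ ψ₂ ∈ (Finset.Iic χ).erase 0,
            wt (φ - ψ₁) + wt (χ - ψ₂) ≤ n := by
          intro ψ₁ h1 ψ₂ h2
          have l1 : ψ₁ ≤ φ := Finset.mem_Iic.mp (Finset.mem_of_mem_erase h1)
          have l2 : ψ₂ ≤ χ := Finset.mem_Iic.mp (Finset.mem_of_mem_erase h2)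
          have n1 : wt ψ₁ ≠ 0 := fun h =>
            (Finset.ne_of_mem_erase h1) (wt_eq_zero.mp h)
          have n2 : wt ψ₂ ≠ 0 := fun h =>
            (Finset.ne_of_mem_erase h2) (wt_eq_zero.mp h)
          have l3 := wt_le l1
          have l4 := wt_le l2
          rw [wt_sub l1, wt_sub l2]
          omega
        constructor
        · -- part (i)
          have step1 : ∀ ψ₁ ∈ (Finset.Iic φ).erase 0, ∀ ψ₂ ∈ (Finset.Iic χ).erase 0,
              ((mF ψ₁ * mF ψ₂ : ℕ) : ℂ) • (el b X * (el (piF ψ₁ * piF ψ₂) H * P (φ - ψ₁) (χ - ψ₂)))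
              = (∑ θ₁ ∈ Finset.Iic (φ - ψ₁), ∑ θ₂ ∈ Finset.Iic (χ - ψ₂), ((mF ψ₁ * mF ψ₂ : ℕ) : ℂ) • (el (piF ψ₁ * piF ψ₂) H * (if wt θ₁ = wt θ₂ then (cchoose (c + (wt θ₁ : ℂ) - 1) (wt θ₁) * ((mF θ₁ * mF θ₂ : ℕ) : ℂ)) • (P (φ - ψ₁ - θ₁) (χ - ψ₂ - θ₂) * el (b * (piF θ₁ * piF θ₂)) X) else 0)))
                - (∑ θ₁ ∈ Finset.Iic (φ - ψ₁), ∑ θ₂ ∈ Finset.Iic (χ - ψ₂), (c * ((mF ψ₁ * mF ψ₂ : ℕ) : ℂ)) • (if wt θ₁ = wt θ₂ then (cchoose (c + (wt θ₁ : ℂ) - 1) (wt θ₁) * ((mF θ₁ * mF θ₂ : ℕ) : ℂ)) • (P (φ - ψ₁ - θ₁) (χ - ψ₂ - θ₂) * el ((piF ψ₁ * piF ψ₂ * b) * (piF θ₁ * piF θ₂)) X) else 0)) := by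
            intro ψ₁ h1 ψ₂ h2
            have hIH1 := (IH (φ - ψ₁) (χ - ψ₂) (hdec ψ₁ h1 ψ₂ h2) b).1
            have hIH2 := (IH (φ - ψ₁) (χ - ψ₂) (hdec ψ₁ h1 ψ₂ h2) (piF ψ₁ * piF ψ₂ * b)).1
            have e1 : el b X * (el (piF ψ₁ * piF ψ₂) H * P (φ - ψ₁) (χ - ψ₂))
                = el (piF ψ₁ * piF ψ₂) H * (el b X * P (φ - ψ₁) (χ - ψ₂))
                  - c • (el (piF ψ₁ * piF ψ₂ * b) X * P (φ - ψ₁) (χ - ψ₂)) := by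
              rw [← mul_assoc, el_swap₁ hX (piF ψ₁ * piF ψ₂) b, sub_mul, mul_assoc, smul_mul_assoc]
            rw [e1, hIH1, hIH2, smul_sub]
            congr 1
            · rw [Finset.mul_sum, Finset.smul_sum]
              refine Finset.sum_congr rfl fun θ₁ _ => ?_
              rw [Finset.mul_sum, Finset.smul_sum]
            · rw [smul_smul, mul_comm ((mF ψ₁ * mF ψ₂ : ℕ) : ℂ) c, Finset.smul_sum]
              refine Finset.sum_congr rfl fun θ₁ _ => ?_
              rw [Finset.smul_sum]
          have hsplit : ∑ ψ₁ ∈ (Finset.Iic φ).erase 0, ∑ ψ₂ ∈ (Finset.Iic χ).erase 0,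
              ((mF ψ₁ * mF ψ₂ : ℕ) : ℂ) • (el b X * (el (piF ψ₁ * piF ψ₂) H * P (φ - ψ₁) (χ - ψ₂)))
              = (∑ ψ₁ ∈ (Finset.Iic φ).erase 0, ∑ ψ₂ ∈ (Finset.Iic χ).erase 0,
              ∑ θ₁ ∈ Finset.Iic (φ - ψ₁), ∑ θ₂ ∈ Finset.Iic (χ - ψ₂),
                ((mF ψ₁ * mF ψ₂ : ℕ) : ℂ) • (el (piF ψ₁ * piF ψ₂) H * (if wt θ₁ = wt θ₂ then (cchoose (c + (wt θ₁ : ℂ) - 1) (wt θ₁) * ((mF θ₁ * mF θ₂ : ℕ) : ℂ)) • (P (φ - ψ₁ - θ₁) (χ - ψ₂ - θ₂) * el (b * (piF θ₁ * piF θ₂)) X) else 0)))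
                - (∑ ψ₁ ∈ (Finset.Iic φ).erase 0, ∑ ψ₂ ∈ (Finset.Iic χ).erase 0,
              ∑ θ₁ ∈ Finset.Iic (φ - ψ₁), ∑ θ₂ ∈ Finset.Iic (χ - ψ₂),
                (c * ((mF ψ₁ * mF ψ₂ : ℕ) : ℂ)) • (if wt θ₁ = wt θ₂ then (cchoose (c + (wt θ₁ : ℂ) - 1) (wt θ₁) * ((mF θ₁ * mF θ₂ : ℕ) : ℂ)) • (P (φ - ψ₁ - θ₁) (χ - ψ₂ - θ₂) * el ((piF ψ₁ * piF ψ₂ * b) * (piF θ₁ * piF θ₂)) X) else 0)) := by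
            rw [Finset.sum_congr rfl (fun ψ₁ h1 => Finset.sum_congr rfl
              (fun ψ₂ h2 => step1 ψ₁ h1 ψ₂ h2))]
            rw [Finset.sum_congr rfl (fun ψ₁ (_ : ψ₁ ∈ (Finset.Iic φ).erase 0) =>
              (Finset.sum_sub_distrib _ _)), Finset.sum_sub_distrib]
          have hA1 : (∑ ψ₁ ∈ (Finset.Iic φ).erase 0, ∑ ψ₂ ∈ (Finset.Iic χ).erase 0,
              ∑ θ₁ ∈ Finset.Iic (φ - ψ₁), ∑ θ₂ ∈ Finset.Iic (χ - ψ₂),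
                ((mF ψ₁ * mF ψ₂ : ℕ) : ℂ) • (el (piF ψ₁ * piF ψ₂) H * (if wt θ₁ = wt θ₂ then (cchoose (c + (wt θ₁ : ℂ) - 1) (wt θ₁) * ((mF θ₁ * mF θ₂ : ℕ) : ℂ)) • (P (φ - ψ₁ - θ₁) (χ - ψ₂ - θ₂) * el (b * (piF θ₁ * piF θ₂)) X) else 0)))
              = ∑ θ₁ ∈ Finset.Iic φ, ∑ θ₂ ∈ Finset.Iic χ, (if wt θ₁ = wt θ₂ then (cchoose (c + (wt θ₁ : ℂ) - 1) (wt θ₁) * ((mF θ₁ * mF θ₂ : ℕ) : ℂ)) • (((-(wt (φ - θ₁) : ℂ)) • P (φ - θ₁) (χ - θ₂)) * el (b * (piF θ₁ * piF θ₂)) X) else 0) := by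
            rw [quad_reorder_swap φ χ (fun ψ₁ ψ₂ θ₁ θ₂ => ((mF ψ₁ * mF ψ₂ : ℕ) : ℂ) • (el (piF ψ₁ * piF ψ₂) H * (if wt θ₁ = wt θ₂ then (cchoose (c + (wt θ₁ : ℂ) - 1) (wt θ₁) * ((mF θ₁ * mF θ₂ : ℕ) : ℂ)) • (P (φ - ψ₁ - θ₁) (χ - ψ₂ - θ₂) * el (b * (piF θ₁ * piF θ₂)) X) else 0)))]
            refine Finset.sum_congr rfl fun θ₁ hθ₁ => Finset.sum_congr rfl fun θ₂ hθ₂ => ?_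
            by_cases hC : wt θ₁ = wt θ₂
            · rw [if_pos hC]
              have hw : wt (φ - θ₁) = wt (χ - θ₂) := by
                have w1 := wt_le (Finset.mem_Iic.mp hθ₁)
                have w2 := wt_le (Finset.mem_Iic.mp hθ₂)
                rw [wt_sub (Finset.mem_Iic.mp hθ₁), wt_sub (Finset.mem_Iic.mp hθ₂)]
                omega
              have epoint : ∀ ψ₁ ∈ (Finset.Iic (φ - θ₁)).erase 0,
                  ∀ ψ₂ ∈ (Finset.Iic (χ - θ₂)).erase 0,
                  ((mF ψ₁ * mF ψ₂ : ℕ) : ℂ) • (el (piF ψ₁ * piF ψ₂) H * (if wt θ₁ = wt θ₂ then (cchoose (c + (wt θ₁ : ℂ) - 1) (wt θ₁) * ((mF θ₁ * mF θ₂ : ℕ) : ℂ)) • (P (φ - ψ₁ - θ₁) (χ - ψ₂ - θ₂) * el (b * (piF θ₁ * piF θ₂)) X) else 0))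
                  = (cchoose (c + (wt θ₁ : ℂ) - 1) (wt θ₁) * ((mF θ₁ * mF θ₂ : ℕ) : ℂ)) • ((((mF ψ₁ * mF ψ₂ : ℕ) : ℂ) • (el (piF ψ₁ * piF ψ₂) H *
                      P (φ - θ₁ - ψ₁) (χ - θ₂ - ψ₂))) * el (b * (piF θ₁ * piF θ₂)) X) := by
                intro ψ₁ _ ψ₂ _
                rw [if_pos hC, tsub_right_comm, tsub_right_comm (b := ψ₂),
                  mul_smul_comm, ← mul_assoc, smul_comm ((mF ψ₁ * mF ψ₂ : ℕ) : ℂ) (cchoose (c + (wt θ₁ : ℂ) - 1) (wt θ₁) * ((mF θ₁ * mF θ₂ : ℕ) : ℂ)), ← smul_mul_assoc]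
              rw [Finset.sum_congr rfl (fun ψ₁ h1 => Finset.sum_congr rfl
                (fun ψ₂ h2 => epoint ψ₁ h1 ψ₂ h2))]
              rw [pull_smul_mul]
              rw [isP_resum hP (φ - θ₁) (χ - θ₂) hw]
            · rw [if_neg hC]
              refine Finset.sum_eq_zero fun ψ₁ _ => Finset.sum_eq_zero fun ψ₂ _ => ?_
              rw [if_neg hC, mul_zero, smul_zero]
          have hA2 : (∑ ψ₁ ∈ (Finset.Iic φ).erase 0, ∑ ψ₂ ∈ (Finset.Iic χ).erase 0,
              ∑ θ₁ ∈ Finset.Iic (φ - ψ₁), ∑ θ₂ ∈ Finset.Iic (χ - ψ₂),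
                (c * ((mF ψ₁ * mF ψ₂ : ℕ) : ℂ)) • (if wt θ₁ = wt θ₂ then (cchoose (c + (wt θ₁ : ℂ) - 1) (wt θ₁) * ((mF θ₁ * mF θ₂ : ℕ) : ℂ)) • (P (φ - ψ₁ - θ₁) (χ - ψ₂ - θ₂) * el ((piF ψ₁ * piF ψ₂ * b) * (piF θ₁ * piF θ₂)) X) else 0))
              = ∑ μ₁ ∈ Finset.Iic φ, ∑ μ₂ ∈ Finset.Iic χ, (c * (∑ ψ₁ ∈ (Finset.Iic μ₁).erase 0, ∑ ψ₂ ∈ (Finset.Iic μ₂).erase 0,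
                (if wt (μ₁ - ψ₁) = wt (μ₂ - ψ₂) then
                  cchoose (c + (wt (μ₁ - ψ₁) : ℂ) - 1) (wt (μ₁ - ψ₁))
                    * ((mF (μ₁ - ψ₁) * mF (μ₂ - ψ₂) : ℕ) : ℂ) * ((mF ψ₁ * mF ψ₂ : ℕ) : ℂ)
                else 0))) • (P (φ - μ₁) (χ - μ₂) * el (b * (piF μ₁ * piF μ₂)) X) := by
            rw [quad_reorder_mu φ χ (fun ψ₁ ψ₂ θ₁ θ₂ => (c * ((mF ψ₁ * mF ψ₂ : ℕ) : ℂ)) • (if wt θ₁ = wt θ₂ then (cchoose (c + (wt θ₁ : ℂ) - 1) (wt θ₁) * ((mF θ₁ * mF θ₂ : ℕ) : ℂ)) • (P (φ - ψ₁ - θ₁) (χ - ψ₂ - θ₂) * el ((piF ψ₁ * piF ψ₂ * b) * (piF θ₁ * piF θ₂)) X) else 0))]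
            refine Finset.sum_congr rfl fun μ₁ hμ₁ => Finset.sum_congr rfl fun μ₂ hμ₂ => ?_
            have epoint : ∀ ψ₁ ∈ (Finset.Iic μ₁).erase 0, ∀ ψ₂ ∈ (Finset.Iic μ₂).erase 0,
                (c * ((mF ψ₁ * mF ψ₂ : ℕ) : ℂ)) • (if wt (μ₁ - ψ₁) = wt (μ₂ - ψ₂) then
                  (cchoose (c + (wt (μ₁ - ψ₁) : ℂ) - 1) (wt (μ₁ - ψ₁))
                    * ((mF (μ₁ - ψ₁) * mF (μ₂ - ψ₂) : ℕ) : ℂ)) •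
                    (P (φ - ψ₁ - (μ₁ - ψ₁)) (χ - ψ₂ - (μ₂ - ψ₂)) *
                      el ((piF ψ₁ * piF ψ₂ * b) * (piF (μ₁ - ψ₁) * piF (μ₂ - ψ₂))) X)
                else 0)
                = (c * (if wt (μ₁ - ψ₁) = wt (μ₂ - ψ₂) then
                    cchoose (c + (wt (μ₁ - ψ₁) : ℂ) - 1) (wt (μ₁ - ψ₁))
                      * ((mF (μ₁ - ψ₁) * mF (μ₂ - ψ₂) : ℕ) : ℂ) * ((mF ψ₁ * mF ψ₂ : ℕ) : ℂ)
                  else 0)) •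
                  (P (φ - μ₁) (χ - μ₂) * el (b * (piF μ₁ * piF μ₂)) X) := by
              intro ψ₁ h1 ψ₂ h2
              have l1 : ψ₁ ≤ μ₁ := Finset.mem_Iic.mp (Finset.mem_of_mem_erase h1)
              have l2 : ψ₂ ≤ μ₂ := Finset.mem_Iic.mp (Finset.mem_of_mem_erase h2)
              have harg1 : φ - ψ₁ - (μ₁ - ψ₁) = φ - μ₁ := sub_sub_sub_cancel_left l1
              have harg2 : χ - ψ₂ - (μ₂ - ψ₂) = χ - μ₂ := sub_sub_sub_cancel_left l2
              have hel : (piF ψ₁ * piF ψ₂ * b) * (piF (μ₁ - ψ₁) * piF (μ₂ - ψ₂))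
                  = b * (piF μ₁ * piF μ₂) := by
                rw [← piF_sub_mul l1, ← piF_sub_mul l2]
                ring
              rw [harg1, harg2, hel]
              by_cases hC : wt (μ₁ - ψ₁) = wt (μ₂ - ψ₂)
              · rw [if_pos hC, if_pos hC, smul_smul]
                congr 1
                ring
              · rw [if_neg hC, if_neg hC, smul_zero, mul_zero, zero_smul]
            rw [Finset.sum_congr rfl (fun ψ₁ h1 => Finset.sum_congr rfl
              (fun ψ₂ h2 => epoint ψ₁ h1 ψ₂ h2))]
            rw [pull_scalar]
          have hfinal : (∑ θ₁ ∈ Finset.Iic φ, ∑ θ₂ ∈ Finset.Iic χ, (if wt θ₁ = wt θ₂ then (cchoose (c + (wt θ₁ : ℂ) - 1) (wt θ₁) * ((mF θ₁ * mF θ₂ : ℕ) : ℂ)) • (((-(wt (φ - θ₁) : ℂ)) • P (φ - θ₁) (χ - θ₂)) * el (b * (piF θ₁ * piF θ₂)) X) else 0))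
              - (∑ μ₁ ∈ Finset.Iic φ, ∑ μ₂ ∈ Finset.Iic χ, (c * (∑ ψ₁ ∈ (Finset.Iic μ₁).erase 0, ∑ ψ₂ ∈ (Finset.Iic μ₂).erase 0,
                (if wt (μ₁ - ψ₁) = wt (μ₂ - ψ₂) then
                  cchoose (c + (wt (μ₁ - ψ₁) : ℂ) - 1) (wt (μ₁ - ψ₁))
                    * ((mF (μ₁ - ψ₁) * mF (μ₂ - ψ₂) : ℕ) : ℂ) * ((mF ψ₁ * mF ψ₂ : ℕ) : ℂ)
                else 0))) • (P (φ - μ₁) (χ - μ₂) * el (b * (piF μ₁ * piF μ₂)) X))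
              = (-(wt φ : ℂ)) • ∑ μ₁ ∈ Finset.Iic φ, ∑ μ₂ ∈ Finset.Iic χ, (if wt μ₁ = wt μ₂ then (cchoose (c + (wt μ₁ : ℂ) - 1) (wt μ₁) * ((mF μ₁ * mF μ₂ : ℕ) : ℂ)) • (P (φ - μ₁) (χ - μ₂) * el (b * (piF μ₁ * piF μ₂)) X) else 0) := by
            rw [Finset.smul_sum, ← Finset.sum_sub_distrib]
            refine Finset.sum_congr rfl fun μ₁ hμ₁ => ?_
            rw [Finset.smul_sum, ← Finset.sum_sub_distrib]
            refine Finset.sum_congr rfl fun μ₂ hμ₂ => ?_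
            have l1 : μ₁ ≤ φ := Finset.mem_Iic.mp hμ₁
            have l2 : μ₂ ≤ χ := Finset.mem_Iic.mp hμ₂
            by_cases hC : wt μ₁ = wt μ₂
            · rw [if_pos hC, if_pos hC, inner_scalar_sum c μ₁ μ₂ hC]
              have hcc := sum_cchoose c (wt μ₁)
              have hsub : ((wt (φ - μ₁) : ℕ) : ℂ) = (wt φ : ℂ) - (wt μ₁ : ℂ) := by
                rw [wt_sub l1]
                exact_mod_cast Nat.cast_sub (wt_le l1)
              rw [smul_mul_assoc, smul_smul, smul_smul, ← sub_smul]
              congr 1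
              rw [hsub]
              push_cast
              linear_combination (-((mF μ₁ : ℂ) * (mF μ₂ : ℂ))) * hcc
            · rw [if_neg hC, if_neg hC]
              have hP0 : P (φ - μ₁) (χ - μ₂) = 0 := by
                apply hP.2.1
                have w1 := wt_le l1
                have w2 := wt_le l2
                rw [wt_sub l1, wt_sub l2]
                omega
              rw [hP0, zero_mul, smul_zero, smul_zero, sub_zero]
          calc el b X * P φ χ
              = (-(wt φ : ℂ)⁻¹) • (el b X * ∑ ψ₁ ∈ (Finset.Iic φ).erase 0,
                  ∑ ψ₂ ∈ (Finset.Iic χ).erase 0,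
                    ((mF ψ₁ * mF ψ₂ : ℕ) : ℂ) • (el (piF ψ₁ * piF ψ₂) H * P (φ - ψ₁) (χ - ψ₂))) := by
                rw [hrec, mul_smul_comm]
            _ = (-(wt φ : ℂ)⁻¹) • ∑ ψ₁ ∈ (Finset.Iic φ).erase 0,
                  ∑ ψ₂ ∈ (Finset.Iic χ).erase 0,
                    ((mF ψ₁ * mF ψ₂ : ℕ) : ℂ) • (el b X * (el (piF ψ₁ * piF ψ₂) H * P (φ - ψ₁) (χ - ψ₂))) := by
                congr 1
                rw [Finset.mul_sum]
                refine Finset.sum_congr rfl fun ψ₁ _ => ?_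
                rw [Finset.mul_sum]
                exact Finset.sum_congr rfl fun ψ₂ _ => mul_smul_comm _ _ _
            _ = (-(wt φ : ℂ)⁻¹) • ((-(wt φ : ℂ)) •
                  ∑ μ₁ ∈ Finset.Iic φ, ∑ μ₂ ∈ Finset.Iic χ, (if wt μ₁ = wt μ₂ then (cchoose (c + (wt μ₁ : ℂ) - 1) (wt μ₁) * ((mF μ₁ * mF μ₂ : ℕ) : ℂ)) • (P (φ - μ₁) (χ - μ₂) * el (b * (piF μ₁ * piF μ₂)) X) else 0)) := by
                rw [hsplit, hA1, hA2, hfinal]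
            _ = _ := by
                rw [smul_smul, neg_mul_neg, inv_mul_cancel₀ hN, one_smul]
        · -- part (ii)
          have step1 : ∀ ψ₁ ∈ (Finset.Iic φ).erase 0, ∀ ψ₂ ∈ (Finset.Iic χ).erase 0,
              ((mF ψ₁ * mF ψ₂ : ℕ) : ℂ) • ((el (piF ψ₁ * piF ψ₂) H * P (φ - ψ₁) (χ - ψ₂)) * el b Xm)
              = (∑ θ₁ ∈ Finset.Iic (φ - ψ₁), ∑ θ₂ ∈ Finset.Iic (χ - ψ₂), ((mF ψ₁ * mF ψ₂ : ℕ) : ℂ) • (if wt θ₁ = wt θ₂ then (cchoose (c + (wt θ₁ : ℂ) - 1) (wt θ₁) * ((mF θ₁ * mF θ₂ : ℕ) : ℂ)) • (el (b * (piF θ₁ * piF θ₂)) Xm * (el (piF ψ₁ * piF ψ₂) H * P (φ - ψ₁ - θ₁) (χ - ψ₂ - θ₂))) else 0))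
                - (∑ θ₁ ∈ Finset.Iic (φ - ψ₁), ∑ θ₂ ∈ Finset.Iic (χ - ψ₂), (c * ((mF ψ₁ * mF ψ₂ : ℕ) : ℂ)) • (if wt θ₁ = wt θ₂ then (cchoose (c + (wt θ₁ : ℂ) - 1) (wt θ₁) * ((mF θ₁ * mF θ₂ : ℕ) : ℂ)) • (el ((piF ψ₁ * piF ψ₂) * (b * (piF θ₁ * piF θ₂))) Xm * P (φ - ψ₁ - θ₁) (χ - ψ₂ - θ₂)) else 0)) := by
            intro ψ₁ h1 ψ₂ h2
            have hIH2 := (IH (φ - ψ₁) (χ - ψ₂) (hdec ψ₁ h1 ψ₂ h2) b).2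
            have e0 : ((mF ψ₁ * mF ψ₂ : ℕ) : ℂ) • ((el (piF ψ₁ * piF ψ₂) H * P (φ - ψ₁) (χ - ψ₂)) * el b Xm)
                = ∑ θ₁ ∈ Finset.Iic (φ - ψ₁), ∑ θ₂ ∈ Finset.Iic (χ - ψ₂),
                    ((mF ψ₁ * mF ψ₂ : ℕ) : ℂ) • (el (piF ψ₁ * piF ψ₂) H *
                      (if wt θ₁ = wt θ₂ then (cchoose (c + (wt θ₁ : ℂ) - 1) (wt θ₁) * ((mF θ₁ * mF θ₂ : ℕ) : ℂ)) • (el (b * (piF θ₁ * piF θ₂)) Xm * P (φ - ψ₁ - θ₁) (χ - ψ₂ - θ₂)) else 0)) := by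
              rw [mul_assoc, hIH2, Finset.mul_sum, Finset.smul_sum]
              refine Finset.sum_congr rfl fun θ₁ _ => ?_
              rw [Finset.mul_sum, Finset.smul_sum]
            have perθ : ∀ θ₁ θ₂ : A →₀ ℕ,
                ((mF ψ₁ * mF ψ₂ : ℕ) : ℂ) • (el (piF ψ₁ * piF ψ₂) H *
                    (if wt θ₁ = wt θ₂ then (cchoose (c + (wt θ₁ : ℂ) - 1) (wt θ₁) * ((mF θ₁ * mF θ₂ : ℕ) : ℂ)) • (el (b * (piF θ₁ * piF θ₂)) Xm * P (φ - ψ₁ - θ₁) (χ - ψ₂ - θ₂)) else 0))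
                = ((mF ψ₁ * mF ψ₂ : ℕ) : ℂ) • (if wt θ₁ = wt θ₂ then (cchoose (c + (wt θ₁ : ℂ) - 1) (wt θ₁) * ((mF θ₁ * mF θ₂ : ℕ) : ℂ)) • (el (b * (piF θ₁ * piF θ₂)) Xm * (el (piF ψ₁ * piF ψ₂) H * P (φ - ψ₁ - θ₁) (χ - ψ₂ - θ₂))) else 0) - (c * ((mF ψ₁ * mF ψ₂ : ℕ) : ℂ)) • (if wt θ₁ = wt θ₂ then (cchoose (c + (wt θ₁ : ℂ) - 1) (wt θ₁) * ((mF θ₁ * mF θ₂ : ℕ) : ℂ)) • (el ((piF ψ₁ * piF ψ₂) * (b * (piF θ₁ * piF θ₂))) Xm * P (φ - ψ₁ - θ₁) (χ - ψ₂ - θ₂)) else 0) := by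
              intro θ₁ θ₂
              by_cases hC : wt θ₁ = wt θ₂
              · rw [if_pos hC, if_pos hC, if_pos hC]
                have e1 : el (piF ψ₁ * piF ψ₂) H * (el (b * (piF θ₁ * piF θ₂)) Xm * P (φ - ψ₁ - θ₁) (χ - ψ₂ - θ₂))
                    = el (b * (piF θ₁ * piF θ₂)) Xm * (el (piF ψ₁ * piF ψ₂) H * P (φ - ψ₁ - θ₁) (χ - ψ₂ - θ₂))
                      + (-c) • (el ((piF ψ₁ * piF ψ₂) * (b * (piF θ₁ * piF θ₂))) Xm * P (φ - ψ₁ - θ₁) (χ - ψ₂ - θ₂)) := by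
                  rw [← mul_assoc, el_swap₂ hXm (piF ψ₁ * piF ψ₂) (b * (piF θ₁ * piF θ₂)), add_mul, mul_assoc,
                    smul_mul_assoc]
                rw [mul_smul_comm, e1, smul_add, smul_add]
                have e2 : ((mF ψ₁ * mF ψ₂ : ℕ) : ℂ) •
                    ((cchoose (c + (wt θ₁ : ℂ) - 1) (wt θ₁) * ((mF θ₁ * mF θ₂ : ℕ) : ℂ)) •
                      ((-c) • (el ((piF ψ₁ * piF ψ₂) * (b * (piF θ₁ * piF θ₂))) Xm *
                        P (φ - ψ₁ - θ₁) (χ - ψ₂ - θ₂))))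
                    = -((c * ((mF ψ₁ * mF ψ₂ : ℕ) : ℂ)) •
                      ((cchoose (c + (wt θ₁ : ℂ) - 1) (wt θ₁) * ((mF θ₁ * mF θ₂ : ℕ) : ℂ)) •
                        (el ((piF ψ₁ * piF ψ₂) * (b * (piF θ₁ * piF θ₂))) Xm *
                          P (φ - ψ₁ - θ₁) (χ - ψ₂ - θ₂)))) := by
                  rw [smul_smul, smul_smul, smul_smul, ← neg_smul]
                  congr 1
                  ring
                rw [e2, ← sub_eq_add_neg]
              · rw [if_neg hC, if_neg hC, if_neg hC]
                simp
            rw [e0, Finset.sum_congr rfl (fun θ₁ _ => Finset.sum_congr rfl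
              (fun θ₂ _ => perθ θ₁ θ₂))]
            rw [Finset.sum_congr rfl (fun θ₁ (_ : θ₁ ∈ Finset.Iic (φ - ψ₁)) =>
              (Finset.sum_sub_distrib _ _)), Finset.sum_sub_distrib]
          have hsplit : ∑ ψ₁ ∈ (Finset.Iic φ).erase 0, ∑ ψ₂ ∈ (Finset.Iic χ).erase 0,
              ((mF ψ₁ * mF ψ₂ : ℕ) : ℂ) • ((el (piF ψ₁ * piF ψ₂) H * P (φ - ψ₁) (χ - ψ₂)) * el b Xm)
              = (∑ ψ₁ ∈ (Finset.Iic φ).erase 0, ∑ ψ₂ ∈ (Finset.Iic χ).erase 0,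
              ∑ θ₁ ∈ Finset.Iic (φ - ψ₁), ∑ θ₂ ∈ Finset.Iic (χ - ψ₂),
                ((mF ψ₁ * mF ψ₂ : ℕ) : ℂ) • (if wt θ₁ = wt θ₂ then (cchoose (c + (wt θ₁ : ℂ) - 1) (wt θ₁) * ((mF θ₁ * mF θ₂ : ℕ) : ℂ)) • (el (b * (piF θ₁ * piF θ₂)) Xm * (el (piF ψ₁ * piF ψ₂) H * P (φ - ψ₁ - θ₁) (χ - ψ₂ - θ₂))) else 0))
                - (∑ ψ₁ ∈ (Finset.Iic φ).erase 0, ∑ ψ₂ ∈ (Finset.Iic χ).erase 0,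
              ∑ θ₁ ∈ Finset.Iic (φ - ψ₁), ∑ θ₂ ∈ Finset.Iic (χ - ψ₂),
                (c * ((mF ψ₁ * mF ψ₂ : ℕ) : ℂ)) • (if wt θ₁ = wt θ₂ then (cchoose (c + (wt θ₁ : ℂ) - 1) (wt θ₁) * ((mF θ₁ * mF θ₂ : ℕ) : ℂ)) • (el ((piF ψ₁ * piF ψ₂) * (b * (piF θ₁ * piF θ₂))) Xm * P (φ - ψ₁ - θ₁) (χ - ψ₂ - θ₂)) else 0)) := by
            rw [Finset.sum_congr rfl (fun ψ₁ h1 => Finset.sum_congr rfl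
              (fun ψ₂ h2 => step1 ψ₁ h1 ψ₂ h2))]
            rw [Finset.sum_congr rfl (fun ψ₁ (_ : ψ₁ ∈ (Finset.Iic φ).erase 0) =>
              (Finset.sum_sub_distrib _ _)), Finset.sum_sub_distrib]
          have hA1 : (∑ ψ₁ ∈ (Finset.Iic φ).erase 0, ∑ ψ₂ ∈ (Finset.Iic χ).erase 0,
              ∑ θ₁ ∈ Finset.Iic (φ - ψ₁), ∑ θ₂ ∈ Finset.Iic (χ - ψ₂),
                ((mF ψ₁ * mF ψ₂ : ℕ) : ℂ) • (if wt θ₁ = wt θ₂ then (cchoose (c + (wt θ₁ : ℂ) - 1) (wt θ₁) * ((mF θ₁ * mF θ₂ : ℕ) : ℂ)) • (el (b * (piF θ₁ * piF θ₂)) Xm * (el (piF ψ₁ * piF ψ₂) H * P (φ - ψ₁ - θ₁) (χ - ψ₂ - θ₂))) else 0))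
              = ∑ θ₁ ∈ Finset.Iic φ, ∑ θ₂ ∈ Finset.Iic χ, (if wt θ₁ = wt θ₂ then (cchoose (c + (wt θ₁ : ℂ) - 1) (wt θ₁) * ((mF θ₁ * mF θ₂ : ℕ) : ℂ)) • (el (b * (piF θ₁ * piF θ₂)) Xm * ((-(wt (φ - θ₁) : ℂ)) • P (φ - θ₁) (χ - θ₂))) else 0) := by
            rw [quad_reorder_swap φ χ (fun ψ₁ ψ₂ θ₁ θ₂ => ((mF ψ₁ * mF ψ₂ : ℕ) : ℂ) • (if wt θ₁ = wt θ₂ then (cchoose (c + (wt θ₁ : ℂ) - 1) (wt θ₁) * ((mF θ₁ * mF θ₂ : ℕ) : ℂ)) • (el (b * (piF θ₁ * piF θ₂)) Xm * (el (piF ψ₁ * piF ψ₂) H * P (φ - ψ₁ - θ₁) (χ - ψ₂ - θ₂))) else 0))]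
            refine Finset.sum_congr rfl fun θ₁ hθ₁ => Finset.sum_congr rfl fun θ₂ hθ₂ => ?_
            by_cases hC : wt θ₁ = wt θ₂
            · rw [if_pos hC]
              have hw : wt (φ - θ₁) = wt (χ - θ₂) := by
                have w1 := wt_le (Finset.mem_Iic.mp hθ₁)
                have w2 := wt_le (Finset.mem_Iic.mp hθ₂)
                rw [wt_sub (Finset.mem_Iic.mp hθ₁), wt_sub (Finset.mem_Iic.mp hθ₂)]
                omega
              have epoint : ∀ ψ₁ ∈ (Finset.Iic (φ - θ₁)).erase 0,
                  ∀ ψ₂ ∈ (Finset.Iic (χ - θ₂)).erase 0,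
                  ((mF ψ₁ * mF ψ₂ : ℕ) : ℂ) • (if wt θ₁ = wt θ₂ then (cchoose (c + (wt θ₁ : ℂ) - 1) (wt θ₁) * ((mF θ₁ * mF θ₂ : ℕ) : ℂ)) • (el (b * (piF θ₁ * piF θ₂)) Xm * (el (piF ψ₁ * piF ψ₂) H * P (φ - ψ₁ - θ₁) (χ - ψ₂ - θ₂))) else 0)
                  = (cchoose (c + (wt θ₁ : ℂ) - 1) (wt θ₁) * ((mF θ₁ * mF θ₂ : ℕ) : ℂ)) • (el (b * (piF θ₁ * piF θ₂)) Xm * (((mF ψ₁ * mF ψ₂ : ℕ) : ℂ) • (el (piF ψ₁ * piF ψ₂) H *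
                      P (φ - θ₁ - ψ₁) (χ - θ₂ - ψ₂)))) := by
                intro ψ₁ _ ψ₂ _
                rw [if_pos hC, tsub_right_comm, tsub_right_comm (b := ψ₂),
                  mul_smul_comm, smul_smul, smul_smul]
                congr 1
                ring
              rw [Finset.sum_congr rfl (fun ψ₁ h1 => Finset.sum_congr rfl
                (fun ψ₂ h2 => epoint ψ₁ h1 ψ₂ h2))]
              rw [pull_smul_mul_left, isP_resum hP (φ - θ₁) (χ - θ₂) hw]
            · rw [if_neg hC]
              refine Finset.sum_eq_zero fun ψ₁ _ => Finset.sum_eq_zero fun ψ₂ _ => ?_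
              rw [if_neg hC, smul_zero]
          have hA2 : (∑ ψ₁ ∈ (Finset.Iic φ).erase 0, ∑ ψ₂ ∈ (Finset.Iic χ).erase 0,
              ∑ θ₁ ∈ Finset.Iic (φ - ψ₁), ∑ θ₂ ∈ Finset.Iic (χ - ψ₂),
                (c * ((mF ψ₁ * mF ψ₂ : ℕ) : ℂ)) • (if wt θ₁ = wt θ₂ then (cchoose (c + (wt θ₁ : ℂ) - 1) (wt θ₁) * ((mF θ₁ * mF θ₂ : ℕ) : ℂ)) • (el ((piF ψ₁ * piF ψ₂) * (b * (piF θ₁ * piF θ₂))) Xm * P (φ - ψ₁ - θ₁) (χ - ψ₂ - θ₂)) else 0))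
              = ∑ μ₁ ∈ Finset.Iic φ, ∑ μ₂ ∈ Finset.Iic χ, (c * (∑ ψ₁ ∈ (Finset.Iic μ₁).erase 0, ∑ ψ₂ ∈ (Finset.Iic μ₂).erase 0,
                (if wt (μ₁ - ψ₁) = wt (μ₂ - ψ₂) then
                  cchoose (c + (wt (μ₁ - ψ₁) : ℂ) - 1) (wt (μ₁ - ψ₁))
                    * ((mF (μ₁ - ψ₁) * mF (μ₂ - ψ₂) : ℕ) : ℂ) * ((mF ψ₁ * mF ψ₂ : ℕ) : ℂ)
                else 0))) • (el (b * (piF μ₁ * piF μ₂)) Xm * P (φ - μ₁) (χ - μ₂)) := by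
            rw [quad_reorder_mu φ χ (fun ψ₁ ψ₂ θ₁ θ₂ => (c * ((mF ψ₁ * mF ψ₂ : ℕ) : ℂ)) • (if wt θ₁ = wt θ₂ then (cchoose (c + (wt θ₁ : ℂ) - 1) (wt θ₁) * ((mF θ₁ * mF θ₂ : ℕ) : ℂ)) • (el ((piF ψ₁ * piF ψ₂) * (b * (piF θ₁ * piF θ₂))) Xm * P (φ - ψ₁ - θ₁) (χ - ψ₂ - θ₂)) else 0))]
            refine Finset.sum_congr rfl fun μ₁ hμ₁ => Finset.sum_congr rfl fun μ₂ hμ₂ => ?_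
            have epoint : ∀ ψ₁ ∈ (Finset.Iic μ₁).erase 0, ∀ ψ₂ ∈ (Finset.Iic μ₂).erase 0,
                (c * ((mF ψ₁ * mF ψ₂ : ℕ) : ℂ)) • (if wt (μ₁ - ψ₁) = wt (μ₂ - ψ₂) then
                  (cchoose (c + (wt (μ₁ - ψ₁) : ℂ) - 1) (wt (μ₁ - ψ₁))
                    * ((mF (μ₁ - ψ₁) * mF (μ₂ - ψ₂) : ℕ) : ℂ)) •
                    (el ((piF ψ₁ * piF ψ₂) * (b * (piF (μ₁ - ψ₁) * piF (μ₂ - ψ₂)))) Xm *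
                      P (φ - ψ₁ - (μ₁ - ψ₁)) (χ - ψ₂ - (μ₂ - ψ₂)))
                else 0)
                = (c * (if wt (μ₁ - ψ₁) = wt (μ₂ - ψ₂) then
                    cchoose (c + (wt (μ₁ - ψ₁) : ℂ) - 1) (wt (μ₁ - ψ₁))
                      * ((mF (μ₁ - ψ₁) * mF (μ₂ - ψ₂) : ℕ) : ℂ) * ((mF ψ₁ * mF ψ₂ : ℕ) : ℂ)
                  else 0)) •
                  (el (b * (piF μ₁ * piF μ₂)) Xm * P (φ - μ₁) (χ - μ₂)) := by
              intro ψ₁ h1 ψ₂ h2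
              have l1 : ψ₁ ≤ μ₁ := Finset.mem_Iic.mp (Finset.mem_of_mem_erase h1)
              have l2 : ψ₂ ≤ μ₂ := Finset.mem_Iic.mp (Finset.mem_of_mem_erase h2)
              have harg1 : φ - ψ₁ - (μ₁ - ψ₁) = φ - μ₁ := sub_sub_sub_cancel_left l1
              have harg2 : χ - ψ₂ - (μ₂ - ψ₂) = χ - μ₂ := sub_sub_sub_cancel_left l2
              have hel : (piF ψ₁ * piF ψ₂) * (b * (piF (μ₁ - ψ₁) * piF (μ₂ - ψ₂)))
                  = b * (piF μ₁ * piF μ₂) := by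
                rw [← piF_sub_mul l1, ← piF_sub_mul l2]
                ring
              rw [harg1, harg2, hel]
              by_cases hC : wt (μ₁ - ψ₁) = wt (μ₂ - ψ₂)
              · rw [if_pos hC, if_pos hC, smul_smul]
                congr 1
                ring
              · rw [if_neg hC, if_neg hC, smul_zero, mul_zero, zero_smul]
            rw [Finset.sum_congr rfl (fun ψ₁ h1 => Finset.sum_congr rfl
              (fun ψ₂ h2 => epoint ψ₁ h1 ψ₂ h2))]
            rw [pull_scalar]
          have hfinal : (∑ θ₁ ∈ Finset.Iic φ, ∑ θ₂ ∈ Finset.Iic χ, (if wt θ₁ = wt θ₂ then (cchoose (c + (wt θ₁ : ℂ) - 1) (wt θ₁) * ((mF θ₁ * mF θ₂ : ℕ) : ℂ)) • (el (b * (piF θ₁ * piF θ₂)) Xm * ((-(wt (φ - θ₁) : ℂ)) • P (φ - θ₁) (χ - θ₂))) else 0))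
              - (∑ μ₁ ∈ Finset.Iic φ, ∑ μ₂ ∈ Finset.Iic χ, (c * (∑ ψ₁ ∈ (Finset.Iic μ₁).erase 0, ∑ ψ₂ ∈ (Finset.Iic μ₂).erase 0,
                (if wt (μ₁ - ψ₁) = wt (μ₂ - ψ₂) then
                  cchoose (c + (wt (μ₁ - ψ₁) : ℂ) - 1) (wt (μ₁ - ψ₁))
                    * ((mF (μ₁ - ψ₁) * mF (μ₂ - ψ₂) : ℕ) : ℂ) * ((mF ψ₁ * mF ψ₂ : ℕ) : ℂ)
                else 0))) • (el (b * (piF μ₁ * piF μ₂)) Xm * P (φ - μ₁) (χ - μ₂)))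
              = (-(wt φ : ℂ)) • ∑ μ₁ ∈ Finset.Iic φ, ∑ μ₂ ∈ Finset.Iic χ, (if wt μ₁ = wt μ₂ then (cchoose (c + (wt μ₁ : ℂ) - 1) (wt μ₁) * ((mF μ₁ * mF μ₂ : ℕ) : ℂ)) • (el (b * (piF μ₁ * piF μ₂)) Xm * P (φ - μ₁) (χ - μ₂)) else 0) := by
            rw [Finset.smul_sum, ← Finset.sum_sub_distrib]
            refine Finset.sum_congr rfl fun μ₁ hμ₁ => ?_
            rw [Finset.smul_sum, ← Finset.sum_sub_distrib]
            refine Finset.sum_congr rfl fun μ₂ hμ₂ => ?_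
            have l1 : μ₁ ≤ φ := Finset.mem_Iic.mp hμ₁
            have l2 : μ₂ ≤ χ := Finset.mem_Iic.mp hμ₂
            by_cases hC : wt μ₁ = wt μ₂
            · rw [if_pos hC, if_pos hC, inner_scalar_sum c μ₁ μ₂ hC]
              have hcc := sum_cchoose c (wt μ₁)
              have hsub : ((wt (φ - μ₁) : ℕ) : ℂ) = (wt φ : ℂ) - (wt μ₁ : ℂ) := by
                rw [wt_sub l1]
                exact_mod_cast Nat.cast_sub (wt_le l1)
              rw [mul_smul_comm, smul_smul, smul_smul, ← sub_smul]
              congr 1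
              rw [hsub]
              push_cast
              linear_combination (-((mF μ₁ : ℂ) * (mF μ₂ : ℂ))) * hcc
            · rw [if_neg hC, if_neg hC]
              have hP0 : P (φ - μ₁) (χ - μ₂) = 0 := by
                apply hP.2.1
                have w1 := wt_le l1
                have w2 := wt_le l2
                rw [wt_sub l1, wt_sub l2]
                omega
              rw [hP0, mul_zero, smul_zero, smul_zero, sub_zero]
          calc P φ χ * el b Xm
              = (-(wt φ : ℂ)⁻¹) • ((∑ ψ₁ ∈ (Finset.Iic φ).erase 0,
                  ∑ ψ₂ ∈ (Finset.Iic χ).erase 0,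
                    ((mF ψ₁ * mF ψ₂ : ℕ) : ℂ) • (el (piF ψ₁ * piF ψ₂) H * P (φ - ψ₁) (χ - ψ₂))) * el b Xm) := by
                rw [hrec, smul_mul_assoc]
            _ = (-(wt φ : ℂ)⁻¹) • ∑ ψ₁ ∈ (Finset.Iic φ).erase 0,
                  ∑ ψ₂ ∈ (Finset.Iic χ).erase 0,
                    ((mF ψ₁ * mF ψ₂ : ℕ) : ℂ) • ((el (piF ψ₁ * piF ψ₂) H * P (φ - ψ₁) (χ - ψ₂)) * el b Xm) := by
                congr 1
                rw [Finset.sum_mul]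
                refine Finset.sum_congr rfl fun ψ₁ _ => ?_
                rw [Finset.sum_mul]
                exact Finset.sum_congr rfl fun ψ₂ _ => smul_mul_assoc _ _ _
            _ = (-(wt φ : ℂ)⁻¹) • ((-(wt φ : ℂ)) •
                  ∑ μ₁ ∈ Finset.Iic φ, ∑ μ₂ ∈ Finset.Iic χ, (if wt μ₁ = wt μ₂ then (cchoose (c + (wt μ₁ : ℂ) - 1) (wt μ₁) * ((mF μ₁ * mF μ₂ : ℕ) : ℂ)) • (el (b * (piF μ₁ * piF μ₂)) Xm * P (φ - μ₁) (χ - μ₂)) else 0)) := by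
                rw [hsplit, hA1, hA2, hfinal]
            _ = _ := by
                rw [smul_smul, neg_mul_neg, inv_mul_cancel₀ hN, one_smul]
    · exact hzero φ χ hwt b

end KeyLemma

/-- commutation of `x_α^± ⊗ b` past `p_i(φ,χ)` in `U(g ⊗ A)`. -/
theorem x_past_p
    [LieAlgebra.IsSimple ℂ g] [FiniteDimensional ℂ g]
    (C : ChevalleyData g)
    (γ : Module.Dual ℂ C.H) (hγ : γ ∈ C.Rpos) (i : Fin C.n)
    (hne : γ (C.coroot (C.α i)) ≠ 0) (b : A)
    (P : (A →₀ ℕ) → (A →₀ ℕ) → UEA A g)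
    (hP : IsP ((C.coroot (C.α i) : g)) P)
    (φ χ : A →₀ ℕ) :
    (el b (C.x true γ) * P φ χ =
      ∑ ψ₁ ∈ Finset.Iic φ, ∑ ψ₂ ∈ Finset.Iic χ,
        if wt ψ₁ = wt ψ₂ then
          (cchoose (γ (C.coroot (C.α i)) + (wt ψ₁ : ℂ) - 1) (wt ψ₁) *
              ((mF ψ₁ * mF ψ₂ : ℕ) : ℂ)) •
            (P (φ - ψ₁) (χ - ψ₂) * el (b * (piF ψ₁ * piF ψ₂)) (C.x true γ))
        else 0) ∧
    (P φ χ * el b (C.x false γ) =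
      ∑ ψ₁ ∈ Finset.Iic φ, ∑ ψ₂ ∈ Finset.Iic χ,
        if wt ψ₁ = wt ψ₂ then
          (cchoose (γ (C.coroot (C.α i)) + (wt ψ₁ : ℂ) - 1) (wt ψ₁) *
              ((mF ψ₁ * mF ψ₂ : ℕ) : ℂ)) •
            (el (b * (piF ψ₁ * piF ψ₂)) (C.x false γ) * P (φ - ψ₁) (χ - ψ₂))
        else 0) := by
  exact key ((C.coroot (C.α i) : g)) (C.x true γ) (C.x false γ) (γ (C.coroot (C.α i)))
    (C.rootvec_pos γ hγ (C.coroot (C.α i))) (C.rootvec_neg γ hγ (C.coroot (C.α i)))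
    P hP (wt φ + wt χ) φ χ le_rfl b

end MapAlgebra
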